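/- arXiv:math/0701435 — 12 statements merged into one kernel-verified Lean document; each statement's English description precedes it below -/
import Mathlib

section
/- For all 1 ≤ j < i ≤ c one has m_j ≤ (t+j−1)·u_{t,t+j−1} and M_i − m_j ≥ (i−j)·u_{t,t+c−i+j} > 0, and consequently m_j/(M_i − m_j) ≤ (t+j−1)/(i−j) as rational numbers. -/
/-- For the degree matrix `u` of a standard determinantal ideal of codimension `c`,
for all `1 ≤ j < i ≤ c` one has `m j ≤ (t+j−1)·u_{t,t+j−1}`,
`M i − m j ≥ (i−j)·u_{t,t+c−i+j} > 0`, and consequently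
`m j/(M i − m j) ≤ (t+j−1)/(i−j)` as rational numbers. -/
theorem ratio_bound_first_factors (t c : ℕ) (ht : 1 ≤ t) (hc : 1 ≤ c)
    (u : ℕ → ℕ → ℕ)
    (hpos : ∀ i j, 1 ≤ i → i ≤ t → 1 ≤ j → j ≤ t + c - 1 → 0 < u i j)
    (hrow : ∀ i j, 1 ≤ i → i + 1 ≤ t → 1 ≤ j → j ≤ t + c - 1 → u i j ≤ u (i + 1) j)
    (hcol : ∀ i j, 1 ≤ i → i ≤ t → 1 ≤ j → j + 1 ≤ t + c - 1 → u i j ≤ u i (j + 1))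
    (m M : ℕ → ℕ)
    (hm : ∀ i, 1 ≤ i → i ≤ c →
      m i = (∑ j ∈ Finset.Icc 1 i, u 1 j) + ∑ k ∈ Finset.Icc 2 t, u k (i + k - 1))
    (hM : ∀ i, 1 ≤ i → i ≤ c →
      M i = (∑ k ∈ Finset.Icc 1 t, u k (c - i + k)) +
        ∑ j ∈ Finset.Icc (t + c - i + 1) (t + c - 1), u t j) :
    ∀ i j, 1 ≤ j → j < i → i ≤ c →
      m j ≤ (t + j - 1) * u t (t + j - 1) ∧
      m j + (i - j) * u t (t + c - i + j) ≤ M i ∧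
      0 < (i - j) * u t (t + c - i + j) ∧
      (m j : ℚ) / ((M i : ℚ) - (m j : ℚ)) ≤ ((t : ℚ) + j - 1) / ((i : ℚ) - j) := by
  -- monotonicity along a column (increasing row)
  have rowmono : ∀ x, 1 ≤ x → x ≤ t + c - 1 → ∀ r d r', r + d = r' → 1 ≤ r → r' ≤ t →
      u r x ≤ u r' x := by
    intro x hx1 hx2 r d
    induction d with
    | zero => intro r' h1 h2 h3; simp only [Nat.add_zero] at h1; subst h1; exact le_rfl
    | succ n ih =>
      intro r' h1 h2 h3
      have h4 := ih (r + n) (by omega) h2 (by omega)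
      have h5 := hrow (r + n) x (by omega) (by omega) hx1 hx2
      have : r + n + 1 = r' := by omega
      rw [← this]; omega
  -- monotonicity along a row (increasing column)
  have colmono : ∀ r, 1 ≤ r → r ≤ t → ∀ x d x', x + d = x' → 1 ≤ x → x' ≤ t + c - 1 →
      u r x ≤ u r x' := by
    intro r hr1 hr2 x d
    induction d with
    | zero => intro x' h1 h2 h3; simp only [Nat.add_zero] at h1; subst h1; exact le_rfl
    | succ n ih =>
      intro x' h1 h2 h3
      have h4 := ih (x + n) (by omega) h2 (by omega)
      have h5 := hcol r (x + n) hr1 hr2 (by omega) (by omega)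
      have : x + n + 1 = x' := by omega
      rw [← this]; omega
  -- full monotonicity
  have mono : ∀ r r' x x', 1 ≤ r → r ≤ r' → r' ≤ t → 1 ≤ x → x ≤ x' → x' ≤ t + c - 1 →
      u r x ≤ u r' x' := by
    intro r r' x x' h1 h2 h3 h4 h5 h6
    have ha := rowmono x h4 (by omega) r (r' - r) r' (by omega) h1 h3
    have hb := colmono r' (by omega) h3 x (x' - x) x' (by omega) h4 h6
    omega
  intro i j hj hji hic
  have hjc : j ≤ c := by omega
  -- rewrite m j as a single sum over columns
  have hmj : m j = ∑ x ∈ Finset.Icc 1 (t + j - 1), u (max (x + 1 - j) 1) x := by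
    rw [hm j hj hjc]
    have hsplit : Finset.Icc 1 (t + j - 1) =
        Finset.Icc 1 j ∪ Finset.Icc (j + 1) (t + j - 1) := by
      ext x; simp only [Finset.mem_Icc, Finset.mem_union]; omega
    have hdisj : Disjoint (Finset.Icc 1 j) (Finset.Icc (j + 1) (t + j - 1)) := by
      rw [Finset.disjoint_left]; intro x hx hx'
      simp only [Finset.mem_Icc] at hx hx'; omega
    rw [hsplit, Finset.sum_union hdisj]
    congr 1
    · apply Finset.sum_congr rfl
      intro x hx; simp only [Finset.mem_Icc] at hx
      have : max (x + 1 - j) 1 = 1 := by omega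
      rw [this]
    · have hmap : Finset.Icc (j + 1) (t + j - 1) =
          Finset.map (addRightEmbedding (j - 1)) (Finset.Icc 2 t) := by
        rw [Finset.map_add_right_Icc]
        congr 1 <;> omega
      rw [hmap, Finset.sum_map]
      apply Finset.sum_congr rfl
      intro k hk; simp only [Finset.mem_Icc] at hk
      simp only [addRightEmbedding_apply]
      have h1 : max (k + (j - 1) + 1 - j) 1 = k := by omega
      have h2 : k + (j - 1) = j + k - 1 := by omega
      rw [h1, h2]
  -- rewrite M i as a single sum over columns
  have hMi : M i = ∑ y ∈ Finset.Icc (c - i + 1) (t + c - 1), u (min (y + i - c) t) y := by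
    rw [hM i (by omega) hic]
    have hsplit : Finset.Icc (c - i + 1) (t + c - 1) =
        Finset.Icc (c - i + 1) (t + c - i) ∪ Finset.Icc (t + c - i + 1) (t + c - 1) := by
      ext y; simp only [Finset.mem_Icc, Finset.mem_union]; omega
    have hdisj : Disjoint (Finset.Icc (c - i + 1) (t + c - i))
        (Finset.Icc (t + c - i + 1) (t + c - 1)) := by
      rw [Finset.disjoint_left]; intro y hy hy'
      simp only [Finset.mem_Icc] at hy hy'; omega
    rw [hsplit, Finset.sum_union hdisj]
    congr 1
    · have hmap : Finset.Icc (c - i + 1) (t + c - i) =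
          Finset.map (addRightEmbedding (c - i)) (Finset.Icc 1 t) := by
        rw [Finset.map_add_right_Icc]
        congr 1 <;> omega
      rw [hmap, Finset.sum_map]
      apply Finset.sum_congr rfl
      intro k hk; simp only [Finset.mem_Icc] at hk
      simp only [addRightEmbedding_apply]
      have h1 : min (k + (c - i) + i - c) t = k := by omega
      have h2 : c - i + k = k + (c - i) := by omega
      rw [h1, h2]
    · apply Finset.sum_congr rfl
      intro y hy; simp only [Finset.mem_Icc] at hy
      have : min (y + i - c) t = t := by omega
      rw [this]
  -- Part 1 : m j ≤ (t+j-1) * u t (t+j-1)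
  have part1 : m j ≤ (t + j - 1) * u t (t + j - 1) := by
    rw [hmj]
    have := Finset.sum_le_card_nsmul (Finset.Icc 1 (t + j - 1))
      (fun x => u (max (x + 1 - j) 1) x) (u t (t + j - 1)) ?_
    · simpa [Nat.card_Icc, smul_eq_mul] using this
    · intro x hx; simp only [Finset.mem_Icc] at hx
      exact mono _ _ _ _ (by omega) (by omega) (by omega) (by omega) (by omega) (by omega)
  -- Part 2 : m j + (i-j) * u t (t+c-i+j) ≤ M i
  have part2 : m j + (i - j) * u t (t + c - i + j) ≤ M i := by
    rw [hmj, hMi]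
    -- split the M-sum
    have hsplit : Finset.Icc (c - i + 1) (t + c - 1) =
        Finset.Icc (c - i + 1) (t + c - i + j - 1) ∪ Finset.Icc (t + c - i + j) (t + c - 1) := by
      ext y; simp only [Finset.mem_Icc, Finset.mem_union]; omega
    have hdisj : Disjoint (Finset.Icc (c - i + 1) (t + c - i + j - 1))
        (Finset.Icc (t + c - i + j) (t + c - 1)) := by
      rw [Finset.disjoint_left]; intro y hy hy'
      simp only [Finset.mem_Icc] at hy hy'; omega
    rw [hsplit, Finset.sum_union hdisj]
    have hA : ∑ x ∈ Finset.Icc 1 (t + j - 1), u (max (x + 1 - j) 1) x ≤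
        ∑ y ∈ Finset.Icc (c - i + 1) (t + c - i + j - 1), u (min (y + i - c) t) y := by
      have hmap : Finset.Icc (c - i + 1) (t + c - i + j - 1) =
          Finset.map (addRightEmbedding (c - i)) (Finset.Icc 1 (t + j - 1)) := by
        rw [Finset.map_add_right_Icc]
        congr 1 <;> omega
      rw [hmap, Finset.sum_map]
      apply Finset.sum_le_sum
      intro x hx; simp only [Finset.mem_Icc] at hx
      simp only [addRightEmbedding_apply]
      have h1 : min (x + (c - i) + i - c) t = min x t := by omega
      rw [h1]
      exact mono _ _ _ _ (by omega) (by omega) (by omega) (by omega) (by omega) (by omega)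
    have hB : (i - j) * u t (t + c - i + j) ≤
        ∑ y ∈ Finset.Icc (t + c - i + j) (t + c - 1), u (min (y + i - c) t) y := by
      have := Finset.card_nsmul_le_sum (Finset.Icc (t + c - i + j) (t + c - 1))
        (fun y => u (min (y + i - c) t) y) (u t (t + c - i + j)) ?_
      · have hcard : (Finset.Icc (t + c - i + j) (t + c - 1)).card = i - j := by
          rw [Nat.card_Icc]; omega
        rw [hcard, smul_eq_mul] at this
        exact this
      · intro y hy; simp only [Finset.mem_Icc] at hy
        have h1 : min (y + i - c) t = t := by omega
        simp only [h1]
        exact mono _ _ _ _ (by omega) (by omega) (by omega) (by omega) (by omega) (by omega)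
    omega
  -- Part 3 : positivity
  have hU2pos : 0 < u t (t + c - i + j) := hpos t (t + c - i + j) ht le_rfl (by omega) (by omega)
  have part3 : 0 < (i - j) * u t (t + c - i + j) := by
    have : 0 < i - j := by omega
    positivity
  refine ⟨part1, part2, part3, ?_⟩
  -- Part 4 : rational inequality
  have hU12 : u t (t + j - 1) ≤ u t (t + c - i + j) :=
    mono _ _ _ _ ht le_rfl le_rfl (by omega) (by omega) (by omega)
  set U1 := u t (t + j - 1) with hU1def
  set U2 := u t (t + c - i + j) with hU2def
  have hq1 : (m j : ℚ) ≤ ((t : ℚ) + j - 1) * U1 := by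
    have := part1
    have hc1 : ((t + j - 1 : ℕ) : ℚ) = (t : ℚ) + j - 1 := by
      push_cast [Nat.cast_sub (by omega : 1 ≤ t + j)]; ring
    calc (m j : ℚ) ≤ ((t + j - 1) * U1 : ℕ) := by exact_mod_cast this
      _ = ((t : ℚ) + j - 1) * U1 := by push_cast [hc1]; ring
  have hq2 : (m j : ℚ) + ((i : ℚ) - j) * U2 ≤ (M i : ℚ) := by
    have hc2 : ((i - j : ℕ) : ℚ) = (i : ℚ) - j := by
      push_cast [Nat.cast_sub (le_of_lt hji)]; ring
    calc (m j : ℚ) + ((i : ℚ) - j) * U2 = ((m j + (i - j) * U2 : ℕ) : ℚ) := by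
          push_cast [hc2]; ring
      _ ≤ (M i : ℚ) := by exact_mod_cast part2
  have hij : (0 : ℚ) < (i : ℚ) - j := by
    have : (j : ℚ) < i := by exact_mod_cast hji
    linarith
  have hU2q : (1 : ℚ) ≤ (U2 : ℚ) := by exact_mod_cast hU2pos
  have hU1q : (0 : ℚ) ≤ (U1 : ℚ) := by positivity
  have hU12q : (U1 : ℚ) ≤ (U2 : ℚ) := by exact_mod_cast hU12
  have hdenpos : (0 : ℚ) < (M i : ℚ) - (m j : ℚ) := by nlinarith
  have htj : (0 : ℚ) ≤ (t : ℚ) + j - 1 := by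
    have : (1 : ℚ) ≤ (t : ℚ) := by exact_mod_cast ht
    have : (1 : ℚ) ≤ (j : ℚ) := by exact_mod_cast hj
    linarith
  rw [div_le_div_iff₀ hdenpos hij]
  have hmq : (0 : ℚ) ≤ (m j : ℚ) := by positivity
  nlinarith [mul_le_mul_of_nonneg_right hq1 (le_of_lt hij),
    mul_le_mul_of_nonneg_left hU12q htj,
    mul_le_mul_of_nonneg_left (sub_le_sub_right hq2 (m j : ℚ)) htj]
end

section
/- For all 1 ≤ i < j ≤ c one has M_j − m_i ≥ u_{t,t+c+i−j} + u_{t,t+c+i−j+1} + ⋯ + u_{t,t+c−1} ≥ (j−i)·u_{t,t+c+i−j} > 0, and consequently m_j/(M_j − m_i) ≤ (t+j−1)/(j−i) as rational numbers. -/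
private lemma sumIcc_range (a b : ℕ) (f : ℕ → ℕ) :
    ∑ x ∈ Finset.Icc a b, f x = ∑ x ∈ Finset.range (b + 1 - a), f (a + x) := by
  rw [← Finset.Ico_add_one_right_eq_Icc, Finset.sum_Ico_eq_sum_range]

/-- For the degree matrix `u` of a standard determinantal ideal of codimension `c`,
for all `1 ≤ i < j ≤ c` one has
`M j − m i ≥ u_{t,t+c+i−j} + ⋯ + u_{t,t+c−1} ≥ (j−i)·u_{t,t+c+i−j} > 0`,
and consequently `m j/(M j − m i) ≤ (t+j−1)/(j−i)` as rational numbers. -/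
theorem ratio_bound_second_factors (t c : ℕ) (ht : 1 ≤ t) (hc : 1 ≤ c)
    (u : ℕ → ℕ → ℕ)
    (hpos : ∀ i j, 1 ≤ i → i ≤ t → 1 ≤ j → j ≤ t + c - 1 → 0 < u i j)
    (hrow : ∀ i j, 1 ≤ i → i + 1 ≤ t → 1 ≤ j → j ≤ t + c - 1 → u i j ≤ u (i + 1) j)
    (hcol : ∀ i j, 1 ≤ i → i ≤ t → 1 ≤ j → j + 1 ≤ t + c - 1 → u i j ≤ u i (j + 1))
    (m M : ℕ → ℕ)
    (hm : ∀ i, 1 ≤ i → i ≤ c →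
      m i = (∑ j ∈ Finset.Icc 1 i, u 1 j) + ∑ k ∈ Finset.Icc 2 t, u k (i + k - 1))
    (hM : ∀ i, 1 ≤ i → i ≤ c →
      M i = (∑ k ∈ Finset.Icc 1 t, u k (c - i + k)) +
        ∑ j ∈ Finset.Icc (t + c - i + 1) (t + c - 1), u t j) :
    ∀ i j, 1 ≤ i → i < j → j ≤ c →
      m i + (∑ s ∈ Finset.Icc (t + c + i - j) (t + c - 1), u t s) ≤ M j ∧
      (j - i) * u t (t + c + i - j) ≤ ∑ s ∈ Finset.Icc (t + c + i - j) (t + c - 1), u t s ∧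
      0 < (j - i) * u t (t + c + i - j) ∧
      (m j : ℚ) / ((M j : ℚ) - (m i : ℚ)) ≤ ((t : ℚ) + j - 1) / ((j : ℚ) - i) := by
  intro i j hi hij hjc
  obtain ⟨t', rfl⟩ : ∃ t', t = t' + 1 := ⟨t - 1, by omega⟩
  obtain ⟨e, rfl⟩ : ∃ e, j = i + e + 1 := ⟨j - i - 1, by omega⟩
  obtain ⟨d, rfl⟩ : ∃ d, c = i + e + 1 + d := ⟨c - (i + e + 1), by omega⟩
  clear hij hjc hc ht
  -- column monotonicity
  have col : ∀ a, 1 ≤ a → a ≤ t' + 1 → ∀ b b', 1 ≤ b → b ≤ b' →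
      b' ≤ t' + i + e + d + 1 → u a b ≤ u a b' := by
    intro a ha hat b b' hb hbb
    induction b', hbb using Nat.le_induction with
    | base => intro _; exact le_rfl
    | succ n hn ih =>
      intro hbound
      exact le_trans (ih (by omega)) (hcol a n ha (by omega) (by omega) (by omega))
  -- row monotonicity
  have row : ∀ b, 1 ≤ b → b ≤ t' + i + e + d + 1 → ∀ a a', 1 ≤ a → a ≤ a' →
      a' ≤ t' + 1 → u a b ≤ u a' b := by
    intro b hb hbt a a' ha haa
    induction a', haa using Nat.le_induction with
    | base => intro _; exact le_rfl
    | succ n hn ih =>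
      intro hbound
      exact le_trans (ih (by omega)) (hrow n b (by omega) (by omega) hb (by omega))
  have mono : ∀ a a' b b', 1 ≤ a → a ≤ a' → a' ≤ t' + 1 → 1 ≤ b → b ≤ b' →
      b' ≤ t' + i + e + d + 1 → u a b ≤ u a' b' := by
    intro a a' b b' ha haa hat hb hbb hbt
    exact le_trans (col a ha (by omega) b b' hb hbb hbt)
      (row b' (by omega) hbt a a' ha haa hat)
  -- the staircase sequence of M j
  set A : ℕ → ℕ := fun r => u (min r (t' + 1)) (d + r) with hA
  have hAle : ∀ a b r, 1 ≤ a → a ≤ min r (t' + 1) → 1 ≤ b → b ≤ d + r →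
      r ≤ t' + i + e + 1 → u a b ≤ A r := by
    intro a b r ha har hb hbr hr
    simp only [hA]
    exact mono a (min r (t' + 1)) b (d + r) ha har (min_le_right _ _) hb hbr (by omega)
  -- normalized sums
  have c1 : ∀ n : ℕ, (∑ j' ∈ Finset.Icc 1 n, u 1 j') =
      ∑ x ∈ Finset.range n, u 1 (1 + x) := by
    intro n
    rw [sumIcc_range]
    exact Finset.sum_congr (by congr 1 <;> omega) fun x _ => rfl
  have c2 : ∀ n : ℕ, (∑ k ∈ Finset.Icc 2 (t' + 1), u k (n + k - 1)) =
      ∑ x ∈ Finset.range t', u (2 + x) (n + 1 + x) := by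
    intro n
    rw [sumIcc_range]
    exact Finset.sum_congr (by congr 1 <;> omega) fun x _ => by congr 1; omega
  have hmi : m i = (∑ x ∈ Finset.range i, u 1 (1 + x)) +
      ∑ x ∈ Finset.range t', u (2 + x) (i + 1 + x) := by
    rw [hm i hi (by omega), c1, c2]
  have hmj : m (i + e + 1) = (∑ x ∈ Finset.range (i + e + 1), u 1 (1 + x)) +
      ∑ x ∈ Finset.range t', u (2 + x) (i + e + 1 + 1 + x) := by
    rw [hm (i + e + 1) (by omega) (by omega), c1, c2]
  have c5 : (∑ k ∈ Finset.Icc 1 (t' + 1), u k (i + e + 1 + d - (i + e + 1) + k)) =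
      ∑ x ∈ Finset.range (t' + 1), A (x + 1) := by
    rw [sumIcc_range]
    refine Finset.sum_congr (by congr 1 <;> omega) fun x hx => ?_
    simp only [Finset.mem_range] at hx
    simp only [hA]
    rw [min_eq_left (by omega)]
    congr 1 <;> omega
  have c6 : (∑ s ∈ Finset.Icc (t' + 1 + (i + e + 1 + d) - (i + e + 1) + 1)
        (t' + 1 + (i + e + 1 + d) - 1), u (t' + 1) s) =
      ∑ x ∈ Finset.range (i + e), A (t' + 1 + x + 1) := by
    rw [sumIcc_range]
    refine Finset.sum_congr (by congr 1 <;> omega) fun x hx => ?_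
    simp only [hA]
    rw [min_eq_right (by omega)]
    congr 1; omega
  have hMA : M (i + e + 1) = ∑ x ∈ Finset.range (t' + 1 + (i + e)), A (x + 1) := by
    rw [hM (i + e + 1) (by omega) (by omega)]
    rw [show i + e + 1 + d - (i + e + 1) = i + e + 1 + d - (i + e + 1) from rfl]
    rw [c5, c6, ← Finset.sum_range_add]
  have hT : (∑ s ∈ Finset.Icc (t' + 1 + (i + e + 1 + d) + i - (i + e + 1))
        (t' + 1 + (i + e + 1 + d) - 1), u (t' + 1) s) =
      ∑ x ∈ Finset.range (e + 1), u (t' + 1) (t' + d + i + 1 + x) := by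
    rw [sumIcc_range]
    exact Finset.sum_congr (by congr 1 <;> omega) fun x _ => by congr 1; omega
  set T : ℕ := ∑ x ∈ Finset.range (e + 1), u (t' + 1) (t' + d + i + 1 + x) with hTdef
  -- (2)
  have h2 : (e + 1) * u (t' + 1) (t' + d + i + 1) ≤ T := by
    rw [hTdef]
    calc (e + 1) * u (t' + 1) (t' + d + i + 1)
        = ∑ _x ∈ Finset.range (e + 1), u (t' + 1) (t' + d + i + 1) := by
          rw [Finset.sum_const, Finset.card_range, smul_eq_mul]
      _ ≤ _ := by
          refine Finset.sum_le_sum fun x hx => ?_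
          simp only [Finset.mem_range] at hx
          exact col (t' + 1) (by omega) le_rfl _ _ (by omega) (by omega) (by omega)
  -- (3)
  have h3 : 0 < (e + 1) * u (t' + 1) (t' + d + i + 1) :=
    Nat.mul_pos (by omega) (hpos (t' + 1) (t' + d + i + 1) (by omega) le_rfl (by omega) (by omega))
  -- (1)
  have hsplit1 : (∑ x ∈ Finset.range (t' + 1 + (i + e)), A (x + 1)) =
      ((∑ x ∈ Finset.range i, A (x + 1)) + ∑ x ∈ Finset.range t', A (i + x + 1)) +
        ∑ x ∈ Finset.range (e + 1), A (i + (t' + x) + 1) := by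
    rw [show t' + 1 + (i + e) = i + (t' + (e + 1)) from by omega]
    rw [Finset.sum_range_add, Finset.sum_range_add, add_assoc]
  have h1 : m i + T ≤ M (i + e + 1) := by
    rw [hmi, hMA, hsplit1, hTdef]
    refine add_le_add (add_le_add ?_ ?_) ?_
    · refine Finset.sum_le_sum fun x hx => ?_
      simp only [Finset.mem_range] at hx
      exact hAle 1 (1 + x) (x + 1) le_rfl (by omega) (by omega) (by omega) (by omega)
    · refine Finset.sum_le_sum fun x hx => ?_
      simp only [Finset.mem_range] at hx
      exact hAle (2 + x) (i + 1 + x) (i + x + 1) (by omega) (by omega) (by omega) (by omega)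
        (by omega)
    · refine Finset.sum_le_sum fun x hx => ?_
      simp only [Finset.mem_range] at hx
      exact hAle (t' + 1) (t' + d + i + 1 + x) (i + (t' + x) + 1) (by omega) (by omega)
        (by omega) (by omega) (by omega)
  -- (4)
  have hsplit2 : (∑ x ∈ Finset.range (t' + 1 + (i + e)), A (x + 1)) =
      (∑ x ∈ Finset.range (i + e + 1), A (x + 1)) +
        ∑ x ∈ Finset.range t', A (i + e + 1 + x + 1) := by
    rw [show t' + 1 + (i + e) = i + e + 1 + t' from by omega]
    rw [Finset.sum_range_add]
  have h4 : m (i + e + 1) ≤ M (i + e + 1) := by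
    rw [hmj, hMA, hsplit2]
    refine add_le_add ?_ ?_
    · refine Finset.sum_le_sum fun x hx => ?_
      simp only [Finset.mem_range] at hx
      exact hAle 1 (1 + x) (x + 1) le_rfl (by omega) (by omega) (by omega) (by omega)
    · refine Finset.sum_le_sum fun x hx => ?_
      simp only [Finset.mem_range] at hx
      exact hAle (2 + x) (i + e + 1 + 1 + x) (i + e + 1 + x + 1) (by omega) (by omega)
        (by omega) (by omega) (by omega)
  -- (5)
  have hT2 : (∑ x ∈ Finset.range (e + 1), A (t' + i + x + 1)) = T := by
    rw [hTdef]
    refine Finset.sum_congr rfl fun x hx => ?_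
    simp only [hA]
    rw [min_eq_right (by omega)]
    congr 1; omega
  have hMsplit : M (i + e + 1) = (∑ x ∈ Finset.range (t' + i), A (x + 1)) + T := by
    rw [hMA, show t' + 1 + (i + e) = t' + i + (e + 1) from by omega,
      Finset.sum_range_add, hT2]
  have hR : (∑ x ∈ Finset.range (t' + i), A (x + 1)) ≤
      (t' + i) * u (t' + 1) (t' + d + i + 1) := by
    calc (∑ x ∈ Finset.range (t' + i), A (x + 1))
        ≤ ∑ _x ∈ Finset.range (t' + i), u (t' + 1) (t' + d + i + 1) := by
          refine Finset.sum_le_sum fun x hx => ?_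
          simp only [Finset.mem_range] at hx
          simp only [hA]
          exact mono (min (x + 1) (t' + 1)) (t' + 1) (d + (x + 1)) (t' + d + i + 1)
            (by omega) (min_le_right _ _) le_rfl (by omega) (by omega) (by omega)
      _ = (t' + i) * u (t' + 1) (t' + d + i + 1) := by
          rw [Finset.sum_const, Finset.card_range, smul_eq_mul]
  have h5 : (e + 1) * M (i + e + 1) ≤ (t' + i + e + 1) * T := by
    calc (e + 1) * M (i + e + 1)
        = (e + 1) * (∑ x ∈ Finset.range (t' + i), A (x + 1)) + (e + 1) * T := by
          rw [hMsplit]; ring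
      _ ≤ (e + 1) * ((t' + i) * u (t' + 1) (t' + d + i + 1)) + (e + 1) * T :=
          Nat.add_le_add_right (Nat.mul_le_mul_left _ hR) _
      _ = (t' + i) * ((e + 1) * u (t' + 1) (t' + d + i + 1)) + (e + 1) * T := by ring
      _ ≤ (t' + i) * T + (e + 1) * T := Nat.add_le_add_right (Nat.mul_le_mul_left _ h2) _
      _ = (t' + i + e + 1) * T := by ring
  -- combine
  have h6 : (e + 1) * m (i + e + 1) + (t' + i + e + 1) * m i ≤
      (t' + i + e + 1) * M (i + e + 1) := by
    calc (e + 1) * m (i + e + 1) + (t' + i + e + 1) * m i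
        ≤ (t' + i + e + 1) * T + (t' + i + e + 1) * m i :=
          Nat.add_le_add_right (le_trans (Nat.mul_le_mul_left _ h4) h5) _
      _ = (t' + i + e + 1) * (m i + T) := by ring
      _ ≤ (t' + i + e + 1) * M (i + e + 1) := Nat.mul_le_mul_left _ h1
  refine ⟨by rw [hT]; exact h1, ?_, ?_, ?_⟩
  · rw [hT, show i + e + 1 - i = e + 1 from by omega,
      show t' + 1 + (i + e + 1 + d) + i - (i + e + 1) = t' + d + i + 1 from by omega]
    exact h2
  · rw [show i + e + 1 - i = e + 1 from by omega,
      show t' + 1 + (i + e + 1 + d) + i - (i + e + 1) = t' + d + i + 1 from by omega]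
    exact h3
  · have hTpos : 0 < T := lt_of_lt_of_le h3 h2
    have hD : (0 : ℚ) < (M (i + e + 1) : ℚ) - (m i : ℚ) := by
      have hn : m i + 1 ≤ M (i + e + 1) := by omega
      have := (Nat.cast_le (α := ℚ)).2 hn
      push_cast at this
      linarith
    have hE : (0 : ℚ) < ((i + e + 1 : ℕ) : ℚ) - ((i : ℕ) : ℚ) := by
      push_cast; linarith
    rw [div_le_div_iff₀ hD hE]
    have h6' := (Nat.cast_le (α := ℚ)).2 h6
    push_cast at h6' ⊢
    nlinarith [h6']
end

section
/- (Theorem 2.4, lower bound, arithmetic form.) For every 1 ≤ i ≤ c the denominators M_i − m_j (for 1 ≤ j < i) and M_j − m_i (for i < j ≤ c) are positive, and ∏_{1≤j<i} m_j/(M_i − m_j) · ∏_{i<j≤c} m_j/(M_j − m_i) ≤ C(t+c−1, t+i−1) · C(t+i−2, i−1), the right-hand side being the i-th total Betti number of a standard determinantal ideal with degree matrix u. -/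
private lemma prodAsc (T : ℕ) (hT : 1 ≤ T) (n : ℕ) :
    (∏ j ∈ Finset.Ico 1 (n + 1), (T + j - 1)) = n.factorial * (T + n - 1).choose n := by
  induction n with
  | zero => simp
  | succ n ih =>
    rw [Finset.prod_Ico_succ_top (by omega : 1 ≤ n + 1), ih]
    have key := Nat.add_one_mul_choose_eq (T + n - 1) n
    rw [(by omega : T + n - 1 + 1 = T + n)] at key
    rw [(by omega : T + (n + 1) - 1 = T + n), Nat.factorial_succ]
    rw [mul_assoc, mul_comm ((T + n - 1).choose n) (T + n), key]
    ring

/-- Theorem 2.4, lower bound, arithmetic form. For every `1 ≤ i ≤ c` the denominators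
`M i − m j` (for `1 ≤ j < i`) and `M j − m i` (for `i < j ≤ c`) are positive, and
`∏_{1≤j<i} m j/(M i − m j) · ∏_{i<j≤c} m j/(M j − m i) ≤ C(t+c−1, t+i−1)·C(t+i−2, i−1)`,
the right-hand side being the `i`-th total Betti number of a standard determinantal
ideal with degree matrix `u`. -/
theorem lower_bound_betti_standard_determinantal (t c : ℕ) (ht : 1 ≤ t) (hc : 1 ≤ c)
    (u : ℕ → ℕ → ℕ)
    (hpos : ∀ i j, 1 ≤ i → i ≤ t → 1 ≤ j → j ≤ t + c - 1 → 0 < u i j)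
    (hrow : ∀ i j, 1 ≤ i → i + 1 ≤ t → 1 ≤ j → j ≤ t + c - 1 → u i j ≤ u (i + 1) j)
    (hcol : ∀ i j, 1 ≤ i → i ≤ t → 1 ≤ j → j + 1 ≤ t + c - 1 → u i j ≤ u i (j + 1))
    (m M : ℕ → ℕ)
    (hm : ∀ i, 1 ≤ i → i ≤ c →
      m i = (∑ j ∈ Finset.Icc 1 i, u 1 j) + ∑ k ∈ Finset.Icc 2 t, u k (i + k - 1))
    (hM : ∀ i, 1 ≤ i → i ≤ c →
      M i = (∑ k ∈ Finset.Icc 1 t, u k (c - i + k)) +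
        ∑ j ∈ Finset.Icc (t + c - i + 1) (t + c - 1), u t j) :
    ∀ i, 1 ≤ i → i ≤ c →
      (∀ j, 1 ≤ j → j < i → m j < M i) ∧
      (∀ j, i < j → j ≤ c → m i < M j) ∧
      (∏ j ∈ Finset.Ico 1 i, (m j : ℚ) / ((M i : ℚ) - (m j : ℚ))) *
        (∏ j ∈ Finset.Ioc i c, (m j : ℚ) / ((M j : ℚ) - (m i : ℚ))) ≤
      ((t + c - 1).choose (t + i - 1) : ℚ) * ((t + i - 2).choose (i - 1) : ℚ) := by
  -- monotonicity of u in columns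
  have monoC : ∀ r j j', 1 ≤ r → r ≤ t → 1 ≤ j → j ≤ j' → j' ≤ t + c - 1 → u r j ≤ u r j' := by
    intro r j j' hr1 hr2 hj1 hjj'
    induction j', hjj' using Nat.le_induction with
    | base => intro _; exact le_rfl
    | succ n hn ih =>
      intro h
      exact (ih (by omega)).trans (hcol r n hr1 hr2 (by omega) (by omega))
  -- monotonicity of u in rows
  have monoR : ∀ j r r', 1 ≤ j → j ≤ t + c - 1 → 1 ≤ r → r ≤ r' → r' ≤ t → u r j ≤ u r' j := by
    intro j r r' hj1 hj2 hr1 hrr'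
    induction r', hrr' using Nat.le_induction with
    | base => intro _; exact le_rfl
    | succ n hn ih =>
      intro h
      exact (ih (by omega)).trans (hrow n j (by omega) (by omega) hj1 hj2)
  have mono : ∀ r r' j j', 1 ≤ r → r ≤ r' → r' ≤ t → 1 ≤ j → j ≤ j' → j' ≤ t + c - 1 →
      u r j ≤ u r' j' := by
    intro r r' j j' h1 h2 h3 h4 h5 h6
    exact (monoC r j j' h1 (h2.trans h3) h4 h5 h6).trans
      (monoR j' r r' (by omega) h6 h1 h2 h3)
  -- m as a sum along its staircase path
  have hmX : ∀ a, 1 ≤ a → a ≤ c →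
      m a = ∑ s ∈ Finset.Ioc 0 (t + a - 1),
        (if s ≤ a then u 1 s else u (s - a + 1) s) := by
    intro a ha hac
    rw [hm a ha hac,
      ← Finset.sum_Ioc_consecutive _ (Nat.zero_le a) (by omega : a ≤ t + a - 1)]
    congr 1
    · rw [show Finset.Icc 1 a = Finset.Ioc 0 a from by rw [← Finset.Icc_add_one_left_eq_Ioc, zero_add]]
      refine Finset.sum_congr rfl ?_
      intro s hs
      rw [Finset.mem_Ioc] at hs
      rw [if_pos hs.2]
    · refine Finset.sum_nbij' (fun k => a + k - 1) (fun s => s - a + 1) ?_ ?_ ?_ ?_ ?_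
      · intro k hk; rw [Finset.mem_Icc] at hk; rw [Finset.mem_Ioc]; beta_reduce; omega
      · intro s hs; rw [Finset.mem_Ioc] at hs; rw [Finset.mem_Icc]; beta_reduce; omega
      · intro k hk; rw [Finset.mem_Icc] at hk; beta_reduce; omega
      · intro s hs; rw [Finset.mem_Ioc] at hs; beta_reduce; omega
      · intro k hk; rw [Finset.mem_Icc] at hk
        beta_reduce
        rw [if_neg (by omega), show a + k - 1 - a + 1 = k from by omega]
  -- M as a sum along its staircase path
  have hMY : ∀ b, 1 ≤ b → b ≤ c →
      M b = ∑ s ∈ Finset.Ioc 0 (t + b - 1),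
        (if s ≤ t then u s (c - b + s) else u t (c - b + s)) := by
    intro b hb hbc
    rw [hM b hb hbc,
      ← Finset.sum_Ioc_consecutive _ (Nat.zero_le t) (by omega : t ≤ t + b - 1)]
    congr 1
    · rw [show Finset.Icc 1 t = Finset.Ioc 0 t from by rw [← Finset.Icc_add_one_left_eq_Ioc, zero_add]]
      refine Finset.sum_congr rfl ?_
      intro s hs
      rw [Finset.mem_Ioc] at hs
      rw [if_pos hs.2]
    · refine Finset.sum_nbij' (fun j => j + b - c) (fun s => s + c - b) ?_ ?_ ?_ ?_ ?_
      · intro j hj; rw [Finset.mem_Icc] at hj; rw [Finset.mem_Ioc]; beta_reduce; omega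
      · intro s hs; rw [Finset.mem_Ioc] at hs; rw [Finset.mem_Icc]; beta_reduce; omega
      · intro j hj; rw [Finset.mem_Icc] at hj; beta_reduce; omega
      · intro s hs; rw [Finset.mem_Ioc] at hs; beta_reduce; omega
      · intro j hj; rw [Finset.mem_Icc] at hj
        beta_reduce
        rw [if_neg (by omega), show c - b + (j + b - c) = j from by omega]
  -- pointwise comparison between the path of m a and the path of M b, a ≤ b
  have hXY : ∀ a b, 1 ≤ a → a ≤ b → b ≤ c → ∀ s ∈ Finset.Ioc 0 (t + a - 1),
      (if s ≤ a then u 1 s else u (s - a + 1) s) ≤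
        (if s ≤ t then u s (c - b + s) else u t (c - b + s)) := by
    intro a b ha hab hbc s hs
    rw [Finset.mem_Ioc] at hs
    split_ifs with h1 h2 h2
    · exact mono _ _ _ _ (by omega) (by omega) (by omega) (by omega) (by omega) (by omega)
    · exact mono _ _ _ _ (by omega) (by omega) (by omega) (by omega) (by omega) (by omega)
    · exact mono _ _ _ _ (by omega) (by omega) (by omega) (by omega) (by omega) (by omega)
    · exact mono _ _ _ _ (by omega) (by omega) (by omega) (by omega) (by omega) (by omega)
  -- the key arithmetic inequalities
  have key : ∀ a b, 1 ≤ a → a < b → b ≤ c →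
      m a < M b ∧ (t + b - 1) * m a ≤ (t + a - 1) * M b ∧
      (b - a) * m b + (t + b - 1) * m a ≤ (t + b - 1) * M b := by
    intro a b ha hab hbc
    have hb : 1 ≤ b := by omega
    have hac : a ≤ c := by omega
    set Y : ℕ → ℕ := fun s => if s ≤ t then u s (c - b + s) else u t (c - b + s) with hY
    set H : ℕ := ∑ s ∈ Finset.Ioc 0 (t + a - 1), Y s with hH
    set T : ℕ := ∑ s ∈ Finset.Ioc (t + a - 1) (t + b - 1), Y s with hT
    set v : ℕ := u t (c - b + (t + a - 1)) with hv
    have hvpos : 0 < v := hpos t _ ht le_rfl (by omega) (by omega)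
    have h1 : m a ≤ H := by
      rw [hmX a ha hac]
      exact Finset.sum_le_sum (hXY a b ha (le_of_lt hab) hbc)
    have hmbMb : m b ≤ M b := by
      rw [hmX b hb hbc, hMY b hb hbc]
      exact Finset.sum_le_sum (hXY b b hb le_rfl hbc)
    have hsplit : M b = H + T := by
      rw [hMY b hb hbc,
        ← Finset.sum_Ioc_consecutive _ (Nat.zero_le (t + a - 1)) (by omega : t + a - 1 ≤ t + b - 1)]
    have hG1 : H ≤ (t + a - 1) * v := by
      have : H ≤ ∑ _s ∈ Finset.Ioc 0 (t + a - 1), v := by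
        refine Finset.sum_le_sum ?_
        intro s hs
        rw [Finset.mem_Ioc] at hs
        simp only [hY]
        split_ifs with h
        · exact mono _ _ _ _ (by omega) (by omega) (by omega) (by omega) (by omega) (by omega)
        · exact mono _ _ _ _ (by omega) (by omega) (by omega) (by omega) (by omega) (by omega)
      calc H ≤ ∑ _s ∈ Finset.Ioc 0 (t + a - 1), v := this
        _ = (t + a - 1) * v := by
            rw [Finset.sum_const, smul_eq_mul, Nat.card_Ioc, Nat.sub_zero]
    have hG2 : (b - a) * v ≤ T := by
      have : ∑ _s ∈ Finset.Ioc (t + a - 1) (t + b - 1), v ≤ T := by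
        refine Finset.sum_le_sum ?_
        intro s hs
        rw [Finset.mem_Ioc] at hs
        simp only [hY]
        rw [if_neg (by omega)]
        exact mono _ _ _ _ (by omega) (by omega) (by omega) (by omega) (by omega) (by omega)
      calc (b - a) * v = ∑ _s ∈ Finset.Ioc (t + a - 1) (t + b - 1), v := by
            rw [Finset.sum_const, smul_eq_mul, Nat.card_Ioc]
            congr 1
            omega
        _ ≤ T := this
    have hTpos : 0 < T := lt_of_lt_of_le (Nat.mul_pos (by omega) hvpos) hG2
    refine ⟨?_, ?_, ?_⟩
    · rw [hsplit]
      exact lt_of_le_of_lt h1 (Nat.lt_add_of_pos_right hTpos)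
    · calc (t + b - 1) * m a = (t + a - 1) * m a + (b - a) * m a := by
            rw [show t + b - 1 = (t + a - 1) + (b - a) from by omega, Nat.add_mul]
        _ ≤ (t + a - 1) * H + (b - a) * H :=
            Nat.add_le_add (Nat.mul_le_mul_left _ h1) (Nat.mul_le_mul_left _ h1)
        _ ≤ (t + a - 1) * H + (b - a) * ((t + a - 1) * v) :=
            Nat.add_le_add_left (Nat.mul_le_mul_left _ hG1) _
        _ = (t + a - 1) * H + (t + a - 1) * ((b - a) * v) := by ring
        _ ≤ (t + a - 1) * H + (t + a - 1) * T :=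
            Nat.add_le_add_left (Nat.mul_le_mul_left _ hG2) _
        _ = (t + a - 1) * (H + T) := by ring
        _ = (t + a - 1) * M b := by rw [hsplit]
    · have hmb' : (b - a) * m b ≤ (b - a) * H + (b - a) * T := by
        rw [← Nat.mul_add]
        exact Nat.mul_le_mul_left _ (by rw [← hsplit]; exact hmbMb)
      have h2 : (b - a) * H ≤ (t + a - 1) * T := by
        calc (b - a) * H ≤ (b - a) * ((t + a - 1) * v) := Nat.mul_le_mul_left _ hG1
          _ = (t + a - 1) * ((b - a) * v) := by ring
          _ ≤ (t + a - 1) * T := Nat.mul_le_mul_left _ hG2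
      calc (b - a) * m b + (t + b - 1) * m a
          ≤ ((b - a) * H + (b - a) * T) + (t + b - 1) * H :=
            Nat.add_le_add hmb' (Nat.mul_le_mul_left _ h1)
        _ ≤ ((t + a - 1) * T + (b - a) * T) + (t + b - 1) * H :=
            Nat.add_le_add_right (Nat.add_le_add_right h2 _) _
        _ = (t + b - 1) * (H + T) := by
            rw [show t + b - 1 = (t + a - 1) + (b - a) from by omega]; ring
        _ = (t + b - 1) * M b := by rw [hsplit]
  -- main statement
  intro i hi1 hic
  refine ⟨fun j hj1 hji => (key j i hj1 hji hic).1,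
    fun j hij hjc => (key i j hi1 hij hjc).1, ?_⟩
  -- first product: termwise bound
  have term1 : ∀ j ∈ Finset.Ico 1 i,
      (m j : ℚ) / ((M i : ℚ) - (m j : ℚ)) ≤ ((t + j - 1 : ℕ) : ℚ) / ((i - j : ℕ) : ℚ) := by
    intro j hj
    rw [Finset.mem_Ico] at hj
    obtain ⟨hstrict, hpart1, -⟩ := key j i hj.1 hj.2 hic
    have hd1 : (0 : ℚ) < (M i : ℚ) - (m j : ℚ) := by
      have : (m j : ℚ) < (M i : ℚ) := by exact_mod_cast hstrict
      linarith
    have hd2 : (0 : ℚ) < ((i - j : ℕ) : ℚ) := by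
      have : 0 < i - j := by omega
      exact_mod_cast this
    rw [div_le_div_iff₀ hd1 hd2]
    have hnat : (t + j - 1) * m j + (i - j) * m j ≤ (t + j - 1) * M i := by
      have e : t + i - 1 = (t + j - 1) + (i - j) := by omega
      calc (t + j - 1) * m j + (i - j) * m j = (t + i - 1) * m j := by
            rw [e, Nat.add_mul]
        _ ≤ (t + j - 1) * M i := hpart1
    have hcast : ((t + j - 1 : ℕ) : ℚ) * (m j : ℚ) + ((i - j : ℕ) : ℚ) * (m j : ℚ)
        ≤ ((t + j - 1 : ℕ) : ℚ) * (M i : ℚ) := by exact_mod_cast hnat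
    nlinarith [hcast]
  have nonneg1 : ∀ j ∈ Finset.Ico 1 i, (0 : ℚ) ≤ (m j : ℚ) / ((M i : ℚ) - (m j : ℚ)) := by
    intro j hj
    rw [Finset.mem_Ico] at hj
    have hstrict := (key j i hj.1 hj.2 hic).1
    have : (m j : ℚ) < (M i : ℚ) := by exact_mod_cast hstrict
    exact div_nonneg (Nat.cast_nonneg _) (by linarith)
  have prod1_le : (∏ j ∈ Finset.Ico 1 i, (m j : ℚ) / ((M i : ℚ) - (m j : ℚ))) ≤
      ∏ j ∈ Finset.Ico 1 i, ((t + j - 1 : ℕ) : ℚ) / ((i - j : ℕ) : ℚ) :=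
    Finset.prod_le_prod nonneg1 term1
  -- second product: termwise bound
  have term2 : ∀ j ∈ Finset.Ioc i c,
      (m j : ℚ) / ((M j : ℚ) - (m i : ℚ)) ≤ ((t + j - 1 : ℕ) : ℚ) / ((j - i : ℕ) : ℚ) := by
    intro j hj
    rw [Finset.mem_Ioc] at hj
    obtain ⟨hstrict, -, hpart2⟩ := key i j hi1 hj.1 hj.2
    have hd1 : (0 : ℚ) < (M j : ℚ) - (m i : ℚ) := by
      have : (m i : ℚ) < (M j : ℚ) := by exact_mod_cast hstrict
      linarith
    have hd2 : (0 : ℚ) < ((j - i : ℕ) : ℚ) := by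
      have : 0 < j - i := by omega
      exact_mod_cast this
    rw [div_le_div_iff₀ hd1 hd2]
    have hcast : ((j - i : ℕ) : ℚ) * (m j : ℚ) + ((t + j - 1 : ℕ) : ℚ) * (m i : ℚ)
        ≤ ((t + j - 1 : ℕ) : ℚ) * (M j : ℚ) := by exact_mod_cast hpart2
    nlinarith [hcast]
  have nonneg2 : ∀ j ∈ Finset.Ioc i c, (0 : ℚ) ≤ (m j : ℚ) / ((M j : ℚ) - (m i : ℚ)) := by
    intro j hj
    rw [Finset.mem_Ioc] at hj
    have hstrict := (key i j hi1 hj.1 hj.2).1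
    have : (m i : ℚ) < (M j : ℚ) := by exact_mod_cast hstrict
    exact div_nonneg (Nat.cast_nonneg _) (by linarith)
  have prod2_le : (∏ j ∈ Finset.Ioc i c, (m j : ℚ) / ((M j : ℚ) - (m i : ℚ))) ≤
      ∏ j ∈ Finset.Ioc i c, ((t + j - 1 : ℕ) : ℚ) / ((j - i : ℕ) : ℚ) :=
    Finset.prod_le_prod nonneg2 term2
  -- evaluate the first product of bounds
  have prodeq1 : (∏ j ∈ Finset.Ico 1 i, ((t + j - 1 : ℕ) : ℚ) / ((i - j : ℕ) : ℚ)) =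
      ((t + i - 2).choose (i - 1) : ℚ) := by
    rw [Finset.prod_div_distrib, ← Nat.cast_prod, ← Nat.cast_prod]
    have hnum : (∏ j ∈ Finset.Ico 1 i, (t + j - 1)) =
        (i - 1).factorial * (t + i - 2).choose (i - 1) := by
      have h := prodAsc t ht (i - 1)
      rw [show i - 1 + 1 = i from by omega, show t + (i - 1) - 1 = t + i - 2 from by omega] at h
      exact h
    have hden : (∏ j ∈ Finset.Ico 1 i, (i - j)) = (i - 1).factorial := by
      rw [← Finset.prod_Ico_id_eq_factorial (i - 1), show i - 1 + 1 = i from by omega]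
      refine Finset.prod_nbij' (fun j => i - j) (fun k => i - k) ?_ ?_ ?_ ?_ ?_
      · intro j hj; rw [Finset.mem_Ico] at hj ⊢; beta_reduce; omega
      · intro k hk; rw [Finset.mem_Ico] at hk ⊢; beta_reduce; omega
      · intro j hj; rw [Finset.mem_Ico] at hj; beta_reduce; omega
      · intro k hk; rw [Finset.mem_Ico] at hk; beta_reduce; omega
      · intro j hj; rfl
    rw [hnum, hden]
    have hne : (((i - 1).factorial : ℚ)) ≠ 0 := Nat.cast_ne_zero.mpr (Nat.factorial_ne_zero _)
    push_cast
    rw [mul_comm, mul_div_assoc, div_self hne, mul_one]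
  -- evaluate the second product of bounds
  have prodeq2 : (∏ j ∈ Finset.Ioc i c, ((t + j - 1 : ℕ) : ℚ) / ((j - i : ℕ) : ℚ)) =
      ((t + c - 1).choose (t + i - 1) : ℚ) := by
    rw [Finset.prod_div_distrib, ← Nat.cast_prod, ← Nat.cast_prod]
    have hnum : (∏ j ∈ Finset.Ioc i c, (t + j - 1)) =
        (c - i).factorial * (t + c - 1).choose (c - i) := by
      have h := prodAsc (t + i) (by omega) (c - i)
      rw [show t + i + (c - i) - 1 = t + c - 1 from by omega] at h
      rw [← h]
      refine Finset.prod_nbij' (fun j => j - i) (fun k => i + k) ?_ ?_ ?_ ?_ ?_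
      · intro j hj; rw [Finset.mem_Ioc] at hj; rw [Finset.mem_Ico]; beta_reduce; omega
      · intro k hk; rw [Finset.mem_Ico] at hk; rw [Finset.mem_Ioc]; beta_reduce; omega
      · intro j hj; rw [Finset.mem_Ioc] at hj; beta_reduce; omega
      · intro k hk; rw [Finset.mem_Ico] at hk; beta_reduce; omega
      · intro j hj; rw [Finset.mem_Ioc] at hj; beta_reduce; omega
    have hden : (∏ j ∈ Finset.Ioc i c, (j - i)) = (c - i).factorial := by
      rw [← Finset.prod_Ico_id_eq_factorial (c - i)]
      refine Finset.prod_nbij' (fun j => j - i) (fun k => i + k) ?_ ?_ ?_ ?_ ?_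
      · intro j hj; rw [Finset.mem_Ioc] at hj; rw [Finset.mem_Ico]; beta_reduce; omega
      · intro k hk; rw [Finset.mem_Ico] at hk; rw [Finset.mem_Ioc]; beta_reduce; omega
      · intro j hj; rw [Finset.mem_Ioc] at hj; beta_reduce; omega
      · intro k hk; rw [Finset.mem_Ico] at hk; beta_reduce; omega
      · intro j hj; rfl
    have hsym : (t + c - 1).choose (c - i) = (t + c - 1).choose (t + i - 1) := by
      rw [show t + i - 1 = t + c - 1 - (c - i) from by omega]
      exact (Nat.choose_symm (by omega)).symm
    rw [hnum, hden, hsym]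
    have hne : (((c - i).factorial : ℚ)) ≠ 0 := Nat.cast_ne_zero.mpr (Nat.factorial_ne_zero _)
    push_cast
    rw [mul_comm, mul_div_assoc, div_self hne, mul_one]
  -- combine
  have hfinal : (∏ j ∈ Finset.Ico 1 i, (m j : ℚ) / ((M i : ℚ) - (m j : ℚ))) *
      (∏ j ∈ Finset.Ioc i c, (m j : ℚ) / ((M j : ℚ) - (m i : ℚ))) ≤
      ((t + i - 2).choose (i - 1) : ℚ) * ((t + c - 1).choose (t + i - 1) : ℚ) := by
    rw [← prodeq1, ← prodeq2]
    exact mul_le_mul prod1_le prod2_le (Finset.prod_nonneg nonneg2)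
      (Finset.prod_nonneg fun j hj => div_nonneg (Nat.cast_nonneg _) (Nat.cast_nonneg _))
  calc (∏ j ∈ Finset.Ico 1 i, (m j : ℚ) / ((M i : ℚ) - (m j : ℚ))) *
      (∏ j ∈ Finset.Ioc i c, (m j : ℚ) / ((M j : ℚ) - (m i : ℚ)))
      ≤ ((t + i - 2).choose (i - 1) : ℚ) * ((t + c - 1).choose (t + i - 1) : ℚ) := hfinal
    _ = ((t + c - 1).choose (t + i - 1) : ℚ) * ((t + i - 2).choose (i - 1) : ℚ) := mul_comm _ _
end

section
/- (Theorem 2.4, upper bound, arithmetic form.) For every 1 ≤ i ≤ c one has C(t+c−1, t+i−1) · C(t+i−2, i−1) ≤ (1/((i−1)!·(c−i)!)) · ∏_{1≤j≤c, j≠i} M_j, the left-hand side being the i-th total Betti number of a standard determinantal ideal with degree matrix u. -/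
lemma prod_fact_aux (t : ℕ) (ht : 1 ≤ t) : ∀ c : ℕ,
    (t - 1).factorial * ∏ j ∈ Finset.Icc 1 c, (t + j - 1) = (t + c - 1).factorial := by
  intro c
  induction c with
  | zero => simp
  | succ n ih =>
    rw [Finset.prod_Icc_succ_top (by omega : 1 ≤ n + 1), ← mul_assoc, ih]
    have h1 : t + (n + 1) - 1 = (t + n - 1) + 1 := by omega
    rw [h1, Nat.factorial_succ, mul_comm]

/-- Theorem 2.4, upper bound, arithmetic form. For every `1 ≤ i ≤ c` one has
`C(t+c−1, t+i−1)·C(t+i−2, i−1) ≤ (1/((i−1)!·(c−i)!)) · ∏_{1≤j≤c, j≠i} M j`,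
the left-hand side being the `i`-th total Betti number of a standard determinantal
ideal with degree matrix `u`. -/
theorem upper_bound_betti_standard_determinantal (t c : ℕ) (ht : 1 ≤ t) (hc : 1 ≤ c)
    (u : ℕ → ℕ → ℕ)
    (hpos : ∀ i j, 1 ≤ i → i ≤ t → 1 ≤ j → j ≤ t + c - 1 → 0 < u i j)
    (hrow : ∀ i j, 1 ≤ i → i + 1 ≤ t → 1 ≤ j → j ≤ t + c - 1 → u i j ≤ u (i + 1) j)
    (hcol : ∀ i j, 1 ≤ i → i ≤ t → 1 ≤ j → j + 1 ≤ t + c - 1 → u i j ≤ u i (j + 1))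
    (m M : ℕ → ℕ)
    (hm : ∀ i, 1 ≤ i → i ≤ c →
      m i = (∑ j ∈ Finset.Icc 1 i, u 1 j) + ∑ k ∈ Finset.Icc 2 t, u k (i + k - 1))
    (hM : ∀ i, 1 ≤ i → i ≤ c →
      M i = (∑ k ∈ Finset.Icc 1 t, u k (c - i + k)) +
        ∑ j ∈ Finset.Icc (t + c - i + 1) (t + c - 1), u t j) :
    ∀ i, 1 ≤ i → i ≤ c →
      ((t + c - 1).choose (t + i - 1) : ℚ) * ((t + i - 2).choose (i - 1) : ℚ) ≤
      (1 / (((i - 1).factorial : ℚ) * ((c - i).factorial : ℚ))) *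
        ∏ j ∈ (Finset.Icc 1 c).erase i, (M j : ℚ) := by
  intro i hi1 hic
  -- Step 1: lower bound for M j
  have hMlb : ∀ j ∈ Finset.Icc 1 c, t + j - 1 ≤ M j := by
    intro j hj
    rw [Finset.mem_Icc] at hj
    rw [hM j hj.1 hj.2]
    have h1 : (Finset.Icc 1 t).card * 1 ≤ ∑ k ∈ Finset.Icc 1 t, u k (c - j + k) := by
      have := Finset.sum_le_sum (s := Finset.Icc 1 t) (f := fun _ => 1)
        (g := fun k => u k (c - j + k)) (fun k hk => by
          rw [Finset.mem_Icc] at hk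
          exact hpos k (c - j + k) hk.1 hk.2 (by omega) (by omega))
      simpa using this
    have h2 : (Finset.Icc (t + c - j + 1) (t + c - 1)).card * 1 ≤
        ∑ x ∈ Finset.Icc (t + c - j + 1) (t + c - 1), u t x := by
      have := Finset.sum_le_sum (s := Finset.Icc (t + c - j + 1) (t + c - 1))
        (f := fun _ => 1) (g := fun x => u t x) (fun x hx => by
          rw [Finset.mem_Icc] at hx
          exact hpos t x ht le_rfl (by omega) (by omega))
      simpa using this
    rw [Nat.card_Icc] at h1 h2
    omega
  -- Step 2: the key combinatorial identity in ℕ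
  have h1 := Nat.choose_mul_factorial_mul_factorial (show t + i - 1 ≤ t + c - 1 by omega)
  have h2 := Nat.choose_mul_factorial_mul_factorial (show i - 1 ≤ t + i - 2 by omega)
  have e1 : t + c - 1 - (t + i - 1) = c - i := by omega
  have e2 : t + i - 2 - (i - 1) = t - 1 := by omega
  rw [e1] at h1
  rw [e2] at h2
  have hP := prod_fact_aux t ht c
  have hins : ∏ j ∈ Finset.Icc 1 c, (t + j - 1)
      = (t + i - 1) * ∏ j ∈ (Finset.Icc 1 c).erase i, (t + j - 1) :=
    (Finset.mul_prod_erase _ _ (Finset.mem_Icc.mpr ⟨hi1, hic⟩)).symm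
  have hfac : (t + i - 1).factorial = (t + i - 1) * (t + i - 2).factorial := by
    have h : t + i - 1 = (t + i - 2) + 1 := by omega
    rw [h, Nat.factorial_succ]
  have heq : ((t + c - 1).choose (t + i - 1) * (t + i - 2).choose (i - 1) *
        ((i - 1).factorial * (c - i).factorial)) * ((t + i - 1) * (t - 1).factorial)
      = (∏ j ∈ (Finset.Icc 1 c).erase i, (t + j - 1)) * ((t + i - 1) * (t - 1).factorial) := by
    calc (t + c - 1).choose (t + i - 1) * (t + i - 2).choose (i - 1) *
          ((i - 1).factorial * (c - i).factorial) * ((t + i - 1) * (t - 1).factorial)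
        = ((t + c - 1).choose (t + i - 1) * (c - i).factorial * (t + i - 1)) *
          ((t + i - 2).choose (i - 1) * (i - 1).factorial * (t - 1).factorial) := by ring
      _ = ((t + c - 1).choose (t + i - 1) * (c - i).factorial * (t + i - 1)) *
          (t + i - 2).factorial := by rw [h2]
      _ = (t + c - 1).choose (t + i - 1) * (t + i - 1).factorial * (c - i).factorial := by
          rw [hfac]; ring
      _ = (t + c - 1).factorial := h1
      _ = (t - 1).factorial * ∏ j ∈ Finset.Icc 1 c, (t + j - 1) := hP.symm
      _ = (t - 1).factorial * ((t + i - 1) * ∏ j ∈ (Finset.Icc 1 c).erase i, (t + j - 1)) := by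
          rw [hins]
      _ = (∏ j ∈ (Finset.Icc 1 c).erase i, (t + j - 1)) * ((t + i - 1) * (t - 1).factorial) := by
          ring
  have hposfac : 0 < (t + i - 1) * (t - 1).factorial :=
    Nat.mul_pos (by omega) (Nat.factorial_pos _)
  have key : (t + c - 1).choose (t + i - 1) * (t + i - 2).choose (i - 1) *
        ((i - 1).factorial * (c - i).factorial)
      = ∏ j ∈ (Finset.Icc 1 c).erase i, (t + j - 1) :=
    Nat.eq_of_mul_eq_mul_right hposfac heq
  -- Step 3: conclude in ℚ
  have ha : (0 : ℚ) < ((i - 1).factorial : ℚ) * ((c - i).factorial : ℚ) := by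
    positivity
  rw [one_div, inv_mul_eq_div, le_div_iff₀ ha]
  have hprodle : ((∏ j ∈ (Finset.Icc 1 c).erase i, (t + j - 1) : ℕ) : ℚ)
      ≤ ∏ j ∈ (Finset.Icc 1 c).erase i, (M j : ℚ) := by
    push_cast
    apply Finset.prod_le_prod
    · intro j hj; positivity
    · intro j hj
      have := hMlb j (Finset.mem_of_mem_erase hj)
      exact_mod_cast this
  calc ((t + c - 1).choose (t + i - 1) : ℚ) * ((t + i - 2).choose (i - 1) : ℚ) *
        (((i - 1).factorial : ℚ) * ((c - i).factorial : ℚ))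
      = ((∏ j ∈ (Finset.Icc 1 c).erase i, (t + j - 1) : ℕ) : ℚ) := by
        rw [← key]; push_cast; ring
    _ ≤ ∏ j ∈ (Finset.Icc 1 c).erase i, (M j : ℚ) := hprodle
end

section
/- (Theorem 3.3, lower bounds, arithmetic form.) The following three inequalities of rational numbers hold, all denominators being positive: (m_2/(M_2 − m_1))·(m_3/(M_3 − m_1)) ≤ t(t+1)/2; (m_1/(M_2 − m_1))·(m_3/(M_3 − m_2)) ≤ t²−1; and (m_1/(M_3 − m_1))·(m_2/(M_3 − m_2)) ≤ t(t−1)/2. The right-hand sides are the total Betti numbers β_1, β_2, β_3 of the ideal of submaximal minors of the symmetric matrix. -/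
/-- Theorem 3.3, lower bounds, arithmetic form, for the ideal of submaximal minors of a
`t × t` homogeneous symmetric matrix: all denominators are positive and
`(m2/(M2−m1))·(m3/(M3−m1)) ≤ t(t+1)/2`, `(m1/(M2−m1))·(m3/(M3−m2)) ≤ t²−1`,
`(m1/(M3−m1))·(m2/(M3−m2)) ≤ t(t−1)/2`, the right-hand sides being the total Betti
numbers `β 1, β 2, β 3`. -/
theorem lower_bound_betti_symmetric_submaximal_minors (t : ℕ) (ht : 2 ≤ t) (a : ℕ → ℚ)
    (hmono : ∀ i, 1 ≤ i → i + 1 ≤ t → a i ≤ a (i + 1))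
    (hint : ∀ i j, 1 ≤ i → i ≤ j → j ≤ t → ∃ n : ℕ, 0 < n ∧ a i + a j = n)
    (ℓ m1 M1 m2 M2 m3 M3 : ℚ)
    (hℓ : ℓ = 2 * ∑ i ∈ Finset.Icc 1 t, a i)
    (hm1 : m1 = ℓ - 2 * a t) (hM1 : M1 = ℓ - 2 * a 1)
    (hm2 : m2 = ℓ - a t + a 1) (hM2 : M2 = ℓ + a t - a 1)
    (hm3 : m3 = ℓ + a 1 + a 2) (hM3 : M3 = ℓ + a (t - 1) + a t) :
    0 < M2 - m1 ∧ 0 < M3 - m1 ∧ 0 < M3 - m2 ∧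
    (m2 / (M2 - m1)) * (m3 / (M3 - m1)) ≤ (t : ℚ) * ((t : ℚ) + 1) / 2 ∧
    (m1 / (M2 - m1)) * (m3 / (M3 - m2)) ≤ (t : ℚ) ^ 2 - 1 ∧
    (m1 / (M3 - m1)) * (m2 / (M3 - m2)) ≤ (t : ℚ) * ((t : ℚ) - 1) / 2 := by
  have ht1 : 1 ≤ t := by omega
  have hT : (2:ℚ) ≤ (t:ℚ) := by exact_mod_cast ht
  obtain ⟨n, hn0, hn⟩ := hint 1 1 le_rfl le_rfl ht1
  have ha1 : 0 < a 1 := by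
    have h1 : (1:ℚ) ≤ n := by exact_mod_cast hn0
    linarith
  have hmono' : ∀ i j, 1 ≤ i → i ≤ j → j ≤ t → a i ≤ a j := by
    intro i j h1i hij
    induction j, hij using Nat.le_induction with
    | base => exact fun _ => le_rfl
    | succ n hn ih =>
      intro hnt
      exact le_trans (ih (by omega)) (hmono n (h1i.trans hn) hnt)
  set u := t - 1 with hu
  have htu : t = u + 1 := by omega
  have hu1 : 1 ≤ u := by omega
  set S := ∑ i ∈ Finset.Icc 1 u, a i with hS
  have hsum : ∑ i ∈ Finset.Icc 1 t, a i = S + a t := by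
    rw [hS, htu, Finset.sum_Icc_succ_top (by omega : 1 ≤ u + 1)]
  have hSnn : 0 ≤ S := Finset.sum_nonneg fun i hi => by
    rw [Finset.mem_Icc] at hi
    exact le_of_lt (lt_of_lt_of_le ha1 (hmono' 1 i le_rfl hi.1 (by omega)))
  have hucast : ((u:ℕ):ℚ) = (t:ℚ) - 1 := by
    rw [htu]; push_cast; ring
  have hSle : S ≤ ((t:ℚ) - 1) * a u := by
    rw [← hucast]
    calc S ≤ ∑ i ∈ Finset.Icc 1 u, a u :=
          Finset.sum_le_sum fun i hi => by
            rw [Finset.mem_Icc] at hi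
            exact hmono' i u hi.1 hi.2 (by omega)
      _ = ((u:ℕ):ℚ) * a u := by
          rw [Finset.sum_const, Nat.card_Icc]; simp [nsmul_eq_mul]
  have h12 : a 1 ≤ a 2 := hmono' 1 2 le_rfl (by omega) ht
  have h1u : a 1 ≤ a u := hmono' 1 u le_rfl hu1 (by omega)
  have hut : a u ≤ a t := hmono' u t hu1 (by omega) le_rfl
  have h2t : a 2 ≤ a t := hmono' 2 t (by omega) ht le_rfl
  have h1t : a 1 ≤ a t := le_trans h1u hut
  have hat : 0 < a t := lt_of_lt_of_le ha1 h1t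
  have hau : 0 < a u := lt_of_lt_of_le ha1 h1u
  have em1 : m1 = 2 * S := by rw [hm1, hℓ, hsum]; ring
  have em2 : m2 = 2 * S + a t + a 1 := by rw [hm2, hℓ, hsum]; ring
  have em3 : m3 = 2 * S + 2 * a t + a 1 + a 2 := by rw [hm3, hℓ, hsum]; ring
  have eM2 : M2 - m1 = 3 * a t - a 1 := by rw [hM2, hm1]; ring
  have eM31 : M3 - m1 = a u + 3 * a t := by rw [hM3, hm1]; ring
  have eM32 : M3 - m2 = a u + 2 * a t - a 1 := by rw [hM3, hm2]; ring
  have hd2 : (0:ℚ) < 3 * a t - a 1 := by linarith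
  have hd31 : (0:ℚ) < a u + 3 * a t := by linarith
  have hd32 : (0:ℚ) < a u + 2 * a t - a 1 := by linarith
  have hT1 : (0:ℚ) ≤ (t:ℚ) - 1 := by linarith
  have q1 : 0 ≤ ((t:ℚ) - 1) * (a t - a u) := mul_nonneg hT1 (by linarith)
  have q2 : 0 ≤ ((t:ℚ) + 1) * (a t - a 1) := mul_nonneg (by linarith) (by linarith)
  have q3 : 0 ≤ ((t:ℚ) - 2) * (a t - a u) := mul_nonneg (by linarith) (by linarith)
  have q5 : 0 ≤ ((t:ℚ) - 1) * (a t - a 1) := mul_nonneg hT1 (by linarith)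
  have hm1n : 0 ≤ 2 * S := by linarith
  have hm2n : 0 ≤ 2 * S + a t + a 1 := by linarith
  have hm3n : 0 ≤ 2 * S + 2 * a t + a 1 + a 2 := by linarith
  have F1 : 2 * S + a t + a 1 ≤ (t:ℚ) * (3 * a t - a 1) := by linarith [hSle, q1, q2]
  have F2 : 2 * S + 2 * a t + a 1 + a 2 ≤ ((t:ℚ) + 1) / 2 * (a u + 3 * a t) := by
    linarith [hSle, q1, h1u, h2t]
  have F3 : 2 * S ≤ ((t:ℚ) - 1) * (3 * a t - a 1) := by linarith [hSle, q1, q5]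
  have F4 : 2 * S + 2 * a t + a 1 + a 2 ≤ ((t:ℚ) + 1) * (a u + 2 * a t - a 1) := by
    linarith [hSle, q2, q3, h1u, h2t]
  have F5 : 2 * S ≤ ((t:ℚ) - 1) / 2 * (a u + 3 * a t) := by linarith [hSle, q1]
  have F6 : 2 * S + a t + a 1 ≤ (t:ℚ) * (a u + 2 * a t - a 1) := by
    linarith [hSle, q2, q3, h1u]
  refine ⟨by rw [eM2]; exact hd2, by rw [eM31]; exact hd31, by rw [eM32]; exact hd32, ?_, ?_, ?_⟩
  · rw [eM2, eM31, em2, em3]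
    calc (2 * S + a t + a 1) / (3 * a t - a 1) *
          ((2 * S + 2 * a t + a 1 + a 2) / (a u + 3 * a t))
        ≤ (t:ℚ) * (((t:ℚ) + 1) / 2) := by
          exact mul_le_mul ((div_le_iff₀ hd2).mpr F1) ((div_le_iff₀ hd31).mpr F2)
            (div_nonneg hm3n hd31.le) (by linarith)
      _ = (t:ℚ) * ((t:ℚ) + 1) / 2 := by ring
  · rw [eM2, eM32, em1, em3]
    calc (2 * S) / (3 * a t - a 1) *
          ((2 * S + 2 * a t + a 1 + a 2) / (a u + 2 * a t - a 1))
        ≤ ((t:ℚ) - 1) * ((t:ℚ) + 1) := by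
          exact mul_le_mul ((div_le_iff₀ hd2).mpr F3) ((div_le_iff₀ hd32).mpr F4)
            (div_nonneg hm3n hd32.le) hT1
      _ = (t:ℚ) ^ 2 - 1 := by ring
  · rw [eM31, eM32, em1, em2]
    calc (2 * S) / (a u + 3 * a t) *
          ((2 * S + a t + a 1) / (a u + 2 * a t - a 1))
        ≤ ((t:ℚ) - 1) / 2 * (t:ℚ) := by
          exact mul_le_mul ((div_le_iff₀ hd31).mpr F5) ((div_le_iff₀ hd32).mpr F6)
            (div_nonneg hm2n hd32.le) (by linarith)
      _ = (t:ℚ) * ((t:ℚ) - 1) / 2 := by ring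
end

section
/- (Theorem 3.3, upper bounds, arithmetic form.) The following three inequalities hold: t(t+1)/2 ≤ (1/2)·M_2·M_3; t²−1 ≤ M_1·M_3; and t(t−1)/2 ≤ (1/2)·M_1·M_2. The left-hand sides are the total Betti numbers β_1, β_2, β_3 of the ideal of submaximal minors of the symmetric matrix. -/
/-- Theorem 3.3, upper bounds, arithmetic form, for the ideal of submaximal minors of a
`t × t` homogeneous symmetric matrix: `t(t+1)/2 ≤ (1/2)·M2·M3`, `t²−1 ≤ M1·M3` and
`t(t−1)/2 ≤ (1/2)·M1·M2`, the left-hand sides being the total Betti numbers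
`β 1, β 2, β 3`. -/
theorem upper_bound_betti_symmetric_submaximal_minors (t : ℕ) (ht : 2 ≤ t) (a : ℕ → ℚ)
    (hmono : ∀ i, 1 ≤ i → i + 1 ≤ t → a i ≤ a (i + 1))
    (hint : ∀ i j, 1 ≤ i → i ≤ j → j ≤ t → ∃ n : ℕ, 0 < n ∧ a i + a j = n)
    (ℓ m1 M1 m2 M2 m3 M3 : ℚ)
    (hℓ : ℓ = 2 * ∑ i ∈ Finset.Icc 1 t, a i)
    (hm1 : m1 = ℓ - 2 * a t) (hM1 : M1 = ℓ - 2 * a 1)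
    (hm2 : m2 = ℓ - a t + a 1) (hM2 : M2 = ℓ + a t - a 1)
    (hm3 : m3 = ℓ + a 1 + a 2) (hM3 : M3 = ℓ + a (t - 1) + a t) :
    (t : ℚ) * ((t : ℚ) + 1) / 2 ≤ (1 / 2) * M2 * M3 ∧
    (t : ℚ) ^ 2 - 1 ≤ M1 * M3 ∧
    (t : ℚ) * ((t : ℚ) - 1) / 2 ≤ (1 / 2) * M1 * M2 := by
  -- each a i ≥ 1/2 for 1 ≤ i ≤ t
  have ha : ∀ i, 1 ≤ i → i ≤ t → (1:ℚ)/2 ≤ a i := by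
    intro i hi1 hit
    obtain ⟨n, hn, hna⟩ := hint i i hi1 le_rfl hit
    have : (1:ℚ) ≤ n := by exact_mod_cast hn
    linarith
  -- ℓ ≥ t
  have hsum : (t:ℚ) * (1/2) ≤ ∑ i ∈ Finset.Icc 1 t, a i := by
    have := Finset.card_nsmul_le_sum (Finset.Icc 1 t) a (1/2)
      (fun i hi => ha i (Finset.mem_Icc.mp hi).1 (Finset.mem_Icc.mp hi).2)
    simpa [Nat.card_Icc, nsmul_eq_mul] using this
  have hℓt : (t:ℚ) ≤ ℓ := by
    have : (2:ℚ) ≤ t := by exact_mod_cast ht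
    linarith [hsum]
  -- a 1 ≤ a t
  have hchain : ∀ j, 1 ≤ j → j ≤ t → a 1 ≤ a j := by
    intro j
    induction j with
    | zero => intro h; omega
    | succ k ih =>
      intro _ hk
      rcases Nat.eq_or_lt_of_le (Nat.one_le_iff_ne_zero.mpr (by omega) : 1 ≤ k + 1) with h | h
      · rw [← h]
      · have hk1 : 1 ≤ k := by omega
        exact le_trans (ih hk1 (by omega)) (hmono k hk1 hk)
  have h1t : a 1 ≤ a t := hchain t (by omega) le_rfl
  -- a (t-1) + a t ≥ 1
  have htt : (1:ℚ) ≤ a (t-1) + a t := by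
    obtain ⟨n, hn, hna⟩ := hint (t-1) t (by omega) (by omega) le_rfl
    have : (1:ℚ) ≤ n := by exact_mod_cast hn
    linarith
  -- 2 a 1 is a positive integer, and M1 = sum over i ≥ 2, namely ℓ - 2 a 1 ≥ t - 1
  have h2a1 : (1:ℚ)/2 ≤ a 1 := ha 1 le_rfl (by omega)
  have hat : (1:ℚ)/2 ≤ a t := ha t (by omega) le_rfl
  -- M1 ≥ t - 1 : ℓ - 2 a 1 = ∑_{i=2}^t 2 a i ≥ t - 1
  have hM1b : (t:ℚ) - 1 ≤ M1 := by
    have key : ∑ i ∈ Finset.Icc 1 t, a i = a 1 + ∑ i ∈ Finset.Icc 2 t, a i := by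
      have : Finset.Icc 1 t = insert 1 (Finset.Icc 2 t) := by
        ext x; simp [Finset.mem_Icc, Finset.mem_insert]; omega
      rw [this, Finset.sum_insert (by simp)]
    have hsum2 : ((t:ℚ) - 1) * (1/2) ≤ ∑ i ∈ Finset.Icc 2 t, a i := by
      have := Finset.card_nsmul_le_sum (Finset.Icc 2 t) a (1/2)
        (fun i hi => ha i (by have := (Finset.mem_Icc.mp hi).1; omega) (Finset.mem_Icc.mp hi).2)
      have hc : (Finset.Icc 2 t).card = t - 1 := by rw [Nat.card_Icc]; omega
      rw [hc, nsmul_eq_mul] at this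
      have : ((t - 1 : ℕ) : ℚ) * (1/2) ≤ ∑ i ∈ Finset.Icc 2 t, a i := this
      have hcast : ((t - 1 : ℕ) : ℚ) = (t:ℚ) - 1 := by
        have h1 : 1 ≤ t := by omega
        simp [Nat.cast_sub h1]
      linarith [hcast ▸ this]
    rw [hM1, hℓ, key]; linarith
  have hM2b : (t:ℚ) ≤ M2 := by rw [hM2]; linarith
  have hM3b : (t:ℚ) + 1 ≤ M3 := by rw [hM3]; linarith
  have ht2 : (2:ℚ) ≤ t := by exact_mod_cast ht
  refine ⟨?_, ?_, ?_⟩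
  · nlinarith [mul_le_mul hM2b hM3b (by linarith) (by linarith : (0:ℚ) ≤ M2)]
  · nlinarith [mul_le_mul hM1b hM3b (by linarith) (by linarith : (0:ℚ) ≤ M1)]
  · nlinarith [mul_le_mul hM1b hM2b (by linarith) (by linarith : (0:ℚ) ≤ M1)]
end

section
/- (Theorem 3.3, equality in the linear case.) If a_1 = a_2 = ⋯ = a_t = 1/2, then m_i = M_i = t+i−2 for i = 1, 2, 3, and all six bounds are attained with equality: (m_2/(M_2−m_1))·(m_3/(M_3−m_1)) = t(t+1)/2 = (1/2)M_2M_3; (m_1/(M_2−m_1))·(m_3/(M_3−m_2)) = t²−1 = M_1M_3; and (m_1/(M_3−m_1))·(m_2/(M_3−m_2)) = t(t−1)/2 = (1/2)M_1M_2. -/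
/-- Theorem 3.3, equality in the linear case. If `a 1 = ⋯ = a t = 1/2` then
`m i = M i = t + i − 2` for `i = 1, 2, 3`, and all six bounds are attained with
equality. -/
theorem equality_betti_symmetric_submaximal_minors_linear (t : ℕ) (ht : 2 ≤ t) (a : ℕ → ℚ)
    (hmono : ∀ i, 1 ≤ i → i + 1 ≤ t → a i ≤ a (i + 1))
    (hint : ∀ i j, 1 ≤ i → i ≤ j → j ≤ t → ∃ n : ℕ, 0 < n ∧ a i + a j = n)
    (ha : ∀ i, 1 ≤ i → i ≤ t → a i = 1 / 2)
    (ℓ m1 M1 m2 M2 m3 M3 : ℚ)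
    (hℓ : ℓ = 2 * ∑ i ∈ Finset.Icc 1 t, a i)
    (hm1 : m1 = ℓ - 2 * a t) (hM1 : M1 = ℓ - 2 * a 1)
    (hm2 : m2 = ℓ - a t + a 1) (hM2 : M2 = ℓ + a t - a 1)
    (hm3 : m3 = ℓ + a 1 + a 2) (hM3 : M3 = ℓ + a (t - 1) + a t) :
    m1 = (t : ℚ) - 1 ∧ M1 = (t : ℚ) - 1 ∧
    m2 = (t : ℚ) ∧ M2 = (t : ℚ) ∧
    m3 = (t : ℚ) + 1 ∧ M3 = (t : ℚ) + 1 ∧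
    (m2 / (M2 - m1)) * (m3 / (M3 - m1)) = (t : ℚ) * ((t : ℚ) + 1) / 2 ∧
    (t : ℚ) * ((t : ℚ) + 1) / 2 = (1 / 2) * M2 * M3 ∧
    (m1 / (M2 - m1)) * (m3 / (M3 - m2)) = (t : ℚ) ^ 2 - 1 ∧
    (t : ℚ) ^ 2 - 1 = M1 * M3 ∧
    (m1 / (M3 - m1)) * (m2 / (M3 - m2)) = (t : ℚ) * ((t : ℚ) - 1) / 2 ∧
    (t : ℚ) * ((t : ℚ) - 1) / 2 = (1 / 2) * M1 * M2 := by
  have h1 : a 1 = 1/2 := ha 1 le_rfl (by omega)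
  have h2 : a 2 = 1/2 := ha 2 (by omega) ht
  have ht1 : a (t-1) = 1/2 := ha (t-1) (by omega) (by omega)
  have htt : a t = 1/2 := ha t (by omega) (by omega)
  have hsum : ∑ i ∈ Finset.Icc 1 t, a i = t / 2 := by
    rw [Finset.sum_congr rfl fun i hi => ha i (Finset.mem_Icc.mp hi).1 (Finset.mem_Icc.mp hi).2]
    simp [Nat.card_Icc]
    ring
  have hℓt : ℓ = t := by rw [hℓ, hsum]; ring
  subst hm1 hM1 hm2 hM2 hm3 hM3
  rw [hℓt, h1, h2, ht1, htt]
  have htQ : (2:ℚ) ≤ t := by exact_mod_cast ht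
  refine ⟨by ring, by ring, by ring, by ring, by ring, by ring, ?_, by ring, ?_, by ring, ?_, by ring⟩ <;>
  · field_simp
    ring
end

section
/- (Theorem 3.6, lower bounds, arithmetic form.) The following inequalities of rational numbers hold, all denominators being positive: (m_2/(M_2−m_1))·(m_3/(M_3−m_1))·(m_4/(M_4−m_1)) ≤ t²; (m_1/(M_2−m_1))·(m_3/(M_3−m_2))·(m_4/(M_4−m_2)) ≤ 2t²−2; (m_1/(M_3−m_1))·(m_2/(M_3−m_2))·(m_4/(M_4−m_3)) ≤ t²; and (m_1/(M_4−m_1))·(m_2/(M_4−m_2))·(m_3/(M_4−m_3)) ≤ 1. The right-hand sides are the total Betti numbers β_1, β_2, β_3, β_4 of the ideal of submaximal minors. -/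
private lemma quot_bound (x y z nx ny nz R : ℚ) (hx : 0 < x) (hy : 0 < y) (hz : 0 < z)
    (h : nx * ny * nz ≤ R * (x * y * z)) : nx / x * (ny / y) * (nz / z) ≤ R := by
  rw [div_mul_div_comm, div_mul_div_comm, div_le_iff₀ (by positivity)]; exact h


/-- Theorem 3.6, lower bounds, arithmetic form, for the codimension-4 Gorenstein ideal
of submaximal minors of a `t × t` homogeneous matrix: all denominators are positive and
the four products of ratios of shifts are bounded above by the total Betti numbers
`t², 2t²−2, t², 1` respectively. -/
theorem lower_bound_betti_gulliksen_negard (t : ℕ) (ht : 2 ≤ t) (a b : ℕ → ℤ)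
    (hamono : ∀ i, 1 ≤ i → i + 1 ≤ t → a i ≤ a (i + 1))
    (hbmono : ∀ i, 1 ≤ i → i + 1 ≤ t → b i ≤ b (i + 1))
    (hab : 1 ≤ a 1 - b t)
    (s m1 M1 m2 M2 m3 M3 m4 M4 : ℤ)
    (hs : s = (∑ i ∈ Finset.Icc 1 t, a i) - ∑ i ∈ Finset.Icc 1 t, b i)
    (hm1 : m1 = s + b 1 - a t) (hM1 : M1 = s + b t - a 1)
    (hm2 : m2 = min (s + b 1 - b t) (s + a 1 - a t))
    (hM2 : M2 = max (s + b t - b 1) (s + a t - a 1))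
    (hm3 : m3 = s - b t + a 1) (hM3 : M3 = s + a t - b 1)
    (hm4 : m4 = 2 * s) (hM4 : M4 = 2 * s) :
    0 < (M2 : ℚ) - m1 ∧ 0 < (M3 : ℚ) - m1 ∧ 0 < (M3 : ℚ) - m2 ∧
    0 < (M4 : ℚ) - m1 ∧ 0 < (M4 : ℚ) - m2 ∧ 0 < (M4 : ℚ) - m3 ∧
    ((m2 : ℚ) / ((M2 : ℚ) - m1)) * ((m3 : ℚ) / ((M3 : ℚ) - m1)) *
      ((m4 : ℚ) / ((M4 : ℚ) - m1)) ≤ (t : ℚ) ^ 2 ∧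
    ((m1 : ℚ) / ((M2 : ℚ) - m1)) * ((m3 : ℚ) / ((M3 : ℚ) - m2)) *
      ((m4 : ℚ) / ((M4 : ℚ) - m2)) ≤ 2 * (t : ℚ) ^ 2 - 2 ∧
    ((m1 : ℚ) / ((M3 : ℚ) - m1)) * ((m2 : ℚ) / ((M3 : ℚ) - m2)) *
      ((m4 : ℚ) / ((M4 : ℚ) - m3)) ≤ (t : ℚ) ^ 2 ∧
    ((m1 : ℚ) / ((M4 : ℚ) - m1)) * ((m2 : ℚ) / ((M4 : ℚ) - m2)) *
      ((m3 : ℚ) / ((M4 : ℚ) - m3)) ≤ 1 := by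
  -- monotonicity across the range
  have mono : ∀ (f : ℕ → ℤ), (∀ i, 1 ≤ i → i + 1 ≤ t → f i ≤ f (i + 1)) →
      ∀ i j, 1 ≤ i → i ≤ j → j ≤ t → f i ≤ f j := by
    intro f hf i j hi hij hjt
    induction j with
    | zero => omega
    | succ n ih =>
      rcases Nat.eq_or_lt_of_le hij with h | h
      · rw [h]
      · exact le_trans (ih (by omega) (by omega)) (hf n (by omega) (by omega))
  obtain ⟨g, hg⟩ : ∃ g : ℤ, g = max (b t - b 1) (a t - a 1) := ⟨_, rfl⟩
  have hm2' : m2 = s - g := by rw [hm2, hg]; omega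
  have hM2' : M2 = s + g := by rw [hM2, hg]; omega
  -- upper bound on s
  have hub : s ≤ (t : ℤ) * (a t - b 1) := by
    rw [hs, ← Finset.sum_sub_distrib]
    calc (∑ i ∈ Finset.Icc 1 t, (a i - b i)) ≤ ∑ _i ∈ Finset.Icc 1 t, (a t - b 1) := by
          refine Finset.sum_le_sum fun i hi => ?_
          simp only [Finset.mem_Icc] at hi
          have h1 : a i ≤ a t := mono a hamono i t hi.1 hi.2 le_rfl
          have h2 : b 1 ≤ b i := mono b hbmono 1 i le_rfl hi.1 hi.2
          omega
      _ = (t : ℤ) * (a t - b 1) := by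
          rw [Finset.sum_const, Nat.card_Icc]; push_cast; ring_nf
  -- lower bound on s
  have hlb : (a t - b 1) + ((t : ℤ) - 1) * (a 1 - b t) ≤ s := by
    have hsub : ({1, t} : Finset ℕ) ⊆ Finset.Icc 1 t := by
      intro x hx; simp at hx; rcases hx with h | h <;> simp [h] <;> omega
    have hnn : ∀ i ∈ Finset.Icc 1 t, 0 ≤ a i - b i - (a 1 - b t) := by
      intro i hi
      simp only [Finset.mem_Icc] at hi
      have h1 : a 1 ≤ a i := mono a hamono 1 i le_rfl hi.1 hi.2
      have h2 : b i ≤ b t := mono b hbmono i t hi.1 hi.2 le_rfl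
      omega
    have hpair := Finset.sum_le_sum_of_subset_of_nonneg hsub (fun i hi _ => hnn i hi)
    rw [Finset.sum_pair (by omega : (1:ℕ) ≠ t)] at hpair
    have htot : (∑ i ∈ Finset.Icc 1 t, (a i - b i - (a 1 - b t)))
        = s - (t : ℤ) * (a 1 - b t) := by
      rw [hs, Finset.sum_sub_distrib, Finset.sum_sub_distrib, Finset.sum_const,
        Nat.card_Icc]
      push_cast; ring_nf
    rw [htot] at hpair
    linarith [hpair]
  have hgab : g + (a 1 - b t) ≤ a t - b 1 := by
    have h1 : a 1 ≤ a t := mono a hamono 1 t le_rfl (by omega) le_rfl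
    have h2 : b 1 ≤ b t := mono b hbmono 1 t le_rfl (by omega) le_rfl
    rw [hg]; omega
  have hg0 : (0:ℤ) ≤ g := by
    have h1 : a 1 ≤ a t := mono a hamono 1 t le_rfl (by omega) le_rfl
    rw [hg]; omega
  clear hm2 hM2 hg hs
  subst hm1 hM1 hm2' hM2' hm3 hM3 hm4 hM4
  push_cast
  obtain ⟨T, hT⟩ : ∃ x : ℚ, x = ((t : ℕ) : ℚ) := ⟨_, rfl⟩
  obtain ⟨S, hS⟩ : ∃ x : ℚ, x = ((s : ℤ) : ℚ) := ⟨_, rfl⟩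
  obtain ⟨A1, hA1⟩ : ∃ x : ℚ, x = ((a 1 : ℤ) : ℚ) := ⟨_, rfl⟩
  obtain ⟨At, hAt⟩ : ∃ x : ℚ, x = ((a t : ℤ) : ℚ) := ⟨_, rfl⟩
  obtain ⟨B1, hB1⟩ : ∃ x : ℚ, x = ((b 1 : ℤ) : ℚ) := ⟨_, rfl⟩
  obtain ⟨Bt, hBt⟩ : ∃ x : ℚ, x = ((b t : ℤ) : ℚ) := ⟨_, rfl⟩
  obtain ⟨G, hG⟩ : ∃ x : ℚ, x = ((g : ℤ) : ℚ) := ⟨_, rfl⟩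
  rw [← hT, ← hS, ← hA1, ← hAt, ← hB1, ← hBt, ← hG]
  have qd : 1 ≤ A1 - Bt := by rw [hA1, hBt]; exact_mod_cast hab
  have qg0 : 0 ≤ G := by rw [hG]; exact_mod_cast hg0
  have qgK : G + (A1 - Bt) ≤ At - B1 := by
    rw [hG, hA1, hBt, hAt, hB1]; exact_mod_cast hgab
  have qub : S ≤ T * (At - B1) := by rw [hS, hT, hAt, hB1]; exact_mod_cast hub
  have qlb : (At - B1) + (T - 1) * (A1 - Bt) ≤ S := by
    rw [hS, hT, hAt, hB1, hA1, hBt]; exact_mod_cast hlb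
  have qt : 2 ≤ T := by rw [hT]; exact_mod_cast ht
  clear hT hS hA1 hAt hB1 hBt hG hub hlb hgab hg0 hab hamono hbmono mono ht
  -- basic positivity in ℚ
  have qtd : 1 ≤ (T - 1) * (A1 - Bt) := by nlinarith
  have qK1 : 1 ≤ At - B1 := by linarith
  have qsK : 1 ≤ S - (At - B1) := by linarith
  have qsg : 1 ≤ S - G := by linarith
  have qsd : 1 ≤ S - (A1 - Bt) := by linarith
  have qS : 2 ≤ S := by linarith
  refine ⟨by linarith, by linarith, by linarith, by linarith, by linarith, by linarith,
    ?_, ?_, ?_, ?_⟩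
  · -- β₁
    refine quot_bound _ _ _ _ _ _ _ (by linarith) (by linarith) (by linarith) ?_
    have hTG : (0:ℚ) ≤ T * G := mul_nonneg (by linarith) qg0
    have A1' : S - G ≤ T * (At - B1) := by linarith
    have A2' : S - Bt + A1 ≤ S + (At - B1) := by linarith
    have A3' : 2 * S ≤ 2 * (T * ((At - B1) + G)) := by
      have : T * (At - B1) ≤ T * ((At - B1) + G) := by nlinarith [hTG]
      linarith
    have hTK : (0:ℚ) ≤ T * (At - B1) := mul_nonneg (by linarith) (by linarith)
    have P1 : (S - G) * (S - Bt + A1) ≤ (T * (At - B1)) * (S + (At - B1)) :=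
      mul_le_mul A1' A2' (by linarith) hTK
    have P2 : ((S - G) * (S - Bt + A1)) * (2 * S) ≤
        ((T * (At - B1)) * (S + (At - B1))) * (2 * (T * ((At - B1) + G))) :=
      mul_le_mul P1 A3' (by linarith) (mul_nonneg hTK (by linarith))
    linarith [P2]
  · -- β₂
    refine quot_bound _ _ _ _ _ _ _ (by linarith) (by linarith) (by linarith) ?_
    have hTG : (0:ℚ) ≤ (T - 1) * G := mul_nonneg (by linarith) qg0
    have hTG' : (0:ℚ) ≤ (T + 1) * G := mul_nonneg (by linarith) qg0
    have h1 : (T - 1) * (At - B1) ≤ (T - 1) * ((At - B1) + G) :=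
      mul_le_mul_of_nonneg_left (by linarith) (by linarith)
    have h2 : (T + 1) * (At - B1) ≤ (T + 1) * ((At - B1) + G) :=
      mul_le_mul_of_nonneg_left (by linarith) (by linarith)
    have hq1 : T * (At - B1) - (At - B1) = (T - 1) * (At - B1) := by ring
    have hq2 : T * (At - B1) + (At - B1) = (T + 1) * (At - B1) := by ring
    have A1' : S + B1 - At ≤ (T - 1) * ((At - B1) + G) := by linarith
    have A2' : S - Bt + A1 ≤ (T + 1) * ((At - B1) + G) := by linarith
    have A3' : 2 * S ≤ 2 * (S + G) := by linarith
    have hpos1 : (0:ℚ) ≤ (T - 1) * ((At - B1) + G) :=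
      mul_nonneg (by linarith) (by linarith)
    have P1 : (S + B1 - At) * (S - Bt + A1) ≤
        ((T - 1) * ((At - B1) + G)) * ((T + 1) * ((At - B1) + G)) :=
      mul_le_mul A1' A2' (by linarith) hpos1
    have P2 : ((S + B1 - At) * (S - Bt + A1)) * (2 * S) ≤
        (((T - 1) * ((At - B1) + G)) * ((T + 1) * ((At - B1) + G))) * (2 * (S + G)) :=
      mul_le_mul P1 A3' (by linarith)
        (mul_nonneg hpos1 (mul_nonneg (by linarith) (by linarith)))
    linarith [P2]
  · -- β₃
    refine quot_bound _ _ _ _ _ _ _ (by linarith) (by linarith) (by linarith) ?_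
    have hTG : (0:ℚ) ≤ T * G := mul_nonneg (by linarith) qg0
    have hTK : (0:ℚ) ≤ T * (At - B1) := mul_nonneg (by linarith) (by linarith)
    have A1' : S + B1 - At ≤ S - (A1 - Bt) := by linarith
    have A2' : S - G ≤ T * (At - B1) := by linarith
    have A3' : 2 * S ≤ 2 * (T * ((At - B1) + G)) := by
      have : T * (At - B1) ≤ T * ((At - B1) + G) := by nlinarith [hTG]
      linarith
    have P1 : (S + B1 - At) * (S - G) ≤ (S - (A1 - Bt)) * (T * (At - B1)) :=
      mul_le_mul A1' A2' (by linarith) (by linarith)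
    have P2 : ((S + B1 - At) * (S - G)) * (2 * S) ≤
        ((S - (A1 - Bt)) * (T * (At - B1))) * (2 * (T * ((At - B1) + G))) :=
      mul_le_mul P1 A3' (by linarith) (mul_nonneg (by linarith) hTK)
    linarith [P2]
  · -- β₄
    refine quot_bound _ _ _ _ _ _ _ (by linarith) (by linarith) (by linarith) ?_
    have A1' : S + B1 - At ≤ S - (A1 - Bt) := by linarith
    have A2' : S - G ≤ S + G := by linarith
    have A3' : S - Bt + A1 ≤ S + (At - B1) := by linarith
    have P1 : (S + B1 - At) * (S - G) ≤ (S - (A1 - Bt)) * (S + G) :=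
      mul_le_mul A1' A2' (by linarith) (by linarith)
    have P2 : ((S + B1 - At) * (S - G)) * (S - Bt + A1) ≤
        ((S - (A1 - Bt)) * (S + G)) * (S + (At - B1)) :=
      mul_le_mul P1 A3' (by linarith)
        (mul_nonneg (by linarith) (by linarith))
    linarith [P2]
end

section
/- (Theorem 3.6, upper bounds, arithmetic form.) The following inequalities hold: t² ≤ (1/6)·M_2·M_3·M_4; 2t²−2 ≤ (1/2)·M_1·M_3·M_4; t² ≤ (1/2)·M_1·M_2·M_4; and 1 ≤ (1/6)·M_1·M_2·M_3. The left-hand sides are the total Betti numbers β_1, β_2, β_3, β_4 of the ideal of submaximal minors, and the coefficients are 1/((i−1)!(4−i)!) for i = 1, 2, 3, 4. -/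
/-- Theorem 3.6, upper bounds, arithmetic form, for the codimension-4 Gorenstein ideal
of submaximal minors of a `t × t` homogeneous matrix:
`t² ≤ (1/6)·M2·M3·M4`, `2t²−2 ≤ (1/2)·M1·M3·M4`, `t² ≤ (1/2)·M1·M2·M4` and
`1 ≤ (1/6)·M1·M2·M3`, the left-hand sides being the total Betti numbers
`β 1, β 2, β 3, β 4` and the coefficients being `1/((i−1)!(4−i)!)`. -/
theorem upper_bound_betti_gulliksen_negard (t : ℕ) (ht : 2 ≤ t) (a b : ℕ → ℤ)
    (hamono : ∀ i, 1 ≤ i → i + 1 ≤ t → a i ≤ a (i + 1))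
    (hbmono : ∀ i, 1 ≤ i → i + 1 ≤ t → b i ≤ b (i + 1))
    (hab : 1 ≤ a 1 - b t)
    (s m1 M1 m2 M2 m3 M3 m4 M4 : ℤ)
    (hs : s = (∑ i ∈ Finset.Icc 1 t, a i) - ∑ i ∈ Finset.Icc 1 t, b i)
    (hm1 : m1 = s + b 1 - a t) (hM1 : M1 = s + b t - a 1)
    (hm2 : m2 = min (s + b 1 - b t) (s + a 1 - a t))
    (hM2 : M2 = max (s + b t - b 1) (s + a t - a 1))
    (hm3 : m3 = s - b t + a 1) (hM3 : M3 = s + a t - b 1)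
    (hm4 : m4 = 2 * s) (hM4 : M4 = 2 * s) :
    (t : ℚ) ^ 2 ≤ (1 / 6) * (M2 : ℚ) * (M3 : ℚ) * (M4 : ℚ) ∧
    2 * (t : ℚ) ^ 2 - 2 ≤ (1 / 2) * (M1 : ℚ) * (M3 : ℚ) * (M4 : ℚ) ∧
    (t : ℚ) ^ 2 ≤ (1 / 2) * (M1 : ℚ) * (M2 : ℚ) * (M4 : ℚ) ∧
    (1 : ℚ) ≤ (1 / 6) * (M1 : ℚ) * (M2 : ℚ) * (M3 : ℚ) := by

  have mono : ∀ (f : ℕ → ℤ), (∀ i, 1 ≤ i → i + 1 ≤ t → f i ≤ f (i + 1)) →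
      ∀ i j, 1 ≤ i → i ≤ j → j ≤ t → f i ≤ f j := by
    intro f hf i j hi hij hjt
    induction j, hij using Nat.le_induction with
    | base => exact le_refl _
    | succ n hn ih =>
      exact (ih (le_trans (Nat.le_succ n) hjt)).trans (hf n (le_trans hi hn) hjt)
  have key : ∀ i, 1 ≤ i → i ≤ t → 1 ≤ a i - b i := by
    intro i h1 h2
    have h3 := mono a hamono 1 i le_rfl h1 h2
    have h4 := mono b hbmono i t h1 h2 le_rfl
    omega
  have hsum : s = ∑ i ∈ Finset.Icc 1 t, (a i - b i) := by
    rw [hs, Finset.sum_sub_distrib]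
  have hst : (t : ℤ) ≤ s := by
    rw [hsum]
    calc (t : ℤ) = ∑ _i ∈ Finset.Icc 1 t, (1 : ℤ) := by
          simp [Nat.card_Icc]
      _ ≤ _ := Finset.sum_le_sum (by
          intro i hi
          simp only [Finset.mem_Icc] at hi
          exact key i hi.1 hi.2)
  have hsplit : s = (a 1 - b 1) + ∑ i ∈ Finset.Icc 2 t, (a i - b i) := by
    have hins : Finset.Icc 1 t = insert 1 (Finset.Icc 2 t) := by
      ext x
      simp only [Finset.mem_Icc, Finset.mem_insert]
      omega
    rw [hsum, hins, Finset.sum_insert (by simp)]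
  have htail : (t : ℤ) - 1 ≤ ∑ i ∈ Finset.Icc 2 t, (a i - b i) := by
    calc (t : ℤ) - 1 = ∑ _i ∈ Finset.Icc 2 t, (1 : ℤ) := by
          simp [Nat.card_Icc]; push_cast; omega
      _ ≤ _ := Finset.sum_le_sum (by
          intro i hi
          simp only [Finset.mem_Icc] at hi
          exact key i (by omega) hi.2)
  have hb1t : b 1 ≤ b t := mono b hbmono 1 t le_rfl (by omega) le_rfl
  have ha1t : a 1 ≤ a t := mono a hamono 1 t le_rfl (by omega) le_rfl
  have hM1' : (t : ℤ) - 1 ≤ M1 := by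
    rw [hM1, hsplit]; omega
  have hM2' : (t : ℤ) ≤ M2 := by
    rw [hM2]
    have : s + b t - b 1 ≤ max (s + b t - b 1) (s + a t - a 1) := le_max_left _ _
    omega
  have hM3' : (t : ℤ) + 1 ≤ M3 := by rw [hM3]; omega
  have hM4' : 2 * (t : ℤ) ≤ M4 := by rw [hM4]; omega
  have hM1q : (t : ℚ) - 1 ≤ (M1 : ℚ) := by exact_mod_cast hM1'
  have hM2q : (t : ℚ) ≤ (M2 : ℚ) := by exact_mod_cast hM2'
  have hM3q : (t : ℚ) + 1 ≤ (M3 : ℚ) := by exact_mod_cast hM3'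
  have hM4q : 2 * (t : ℚ) ≤ (M4 : ℚ) := by exact_mod_cast hM4'
  have htq : (2 : ℚ) ≤ (t : ℚ) := by exact_mod_cast ht
  refine ⟨?_, ?_, ?_, ?_⟩
  · nlinarith [mul_le_mul hM2q hM3q (by linarith) (by linarith),
      mul_le_mul (mul_le_mul hM2q hM3q (by linarith) (by linarith)) hM4q (by linarith)
        (by nlinarith)]
  · nlinarith [mul_le_mul (mul_le_mul hM1q hM3q (by linarith) (by linarith)) hM4q (by linarith)
        (by nlinarith),
      mul_nonneg (by linarith : (0:ℚ) ≤ (t:ℚ) - 2) (by nlinarith : (0:ℚ) ≤ (t:ℚ)^2 - 1)]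
  · nlinarith [mul_le_mul hM1q hM2q (by linarith) (by linarith),
      mul_le_mul (mul_le_mul hM1q hM2q (by linarith) (by linarith)) hM4q (by linarith)
        (by nlinarith)]
  · nlinarith [mul_le_mul (mul_le_mul hM1q hM2q (by linarith) (by linarith)) hM3q (by linarith)
        (by nlinarith),
      mul_nonneg (by linarith : (0:ℚ) ≤ (t:ℚ) - 2) (by nlinarith : (0:ℚ) ≤ (t:ℚ)^2 + 2*(t:ℚ) + 3)]
end

section
/- (Theorem 3.6, equality in the linear case.) If b_i = 0 for all i and a_j = 1 for all j (so every entry of the matrix is linear), then m_1 = M_1 = t−1, m_2 = M_2 = t, m_3 = M_3 = t+1, m_4 = M_4 = 2t, and the lower bounds are attained with equality: (m_2/(M_2−m_1))·(m_3/(M_3−m_1))·(m_4/(M_4−m_1)) = t²; (m_1/(M_2−m_1))·(m_3/(M_3−m_2))·(m_4/(M_4−m_2)) = 2t²−2; (m_1/(M_3−m_1))·(m_2/(M_3−m_2))·(m_4/(M_4−m_3)) = t²; and (m_1/(M_4−m_1))·(m_2/(M_4−m_2))·(m_3/(M_4−m_3)) = 1. -/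
/-- Theorem 3.6, equality in the linear case. If `b i = 0` and `a j = 1` for all
admissible indices (so every entry of the matrix is linear), then
`m1 = M1 = t−1`, `m2 = M2 = t`, `m3 = M3 = t+1`, `m4 = M4 = 2t`, and the lower
bounds are attained with equality. -/
theorem equality_betti_gulliksen_negard_linear (t : ℕ) (ht : 2 ≤ t) (a b : ℕ → ℤ)
    (hamono : ∀ i, 1 ≤ i → i + 1 ≤ t → a i ≤ a (i + 1))
    (hbmono : ∀ i, 1 ≤ i → i + 1 ≤ t → b i ≤ b (i + 1))
    (hab : 1 ≤ a 1 - b t)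
    (hb0 : ∀ i, 1 ≤ i → i ≤ t → b i = 0)
    (ha1 : ∀ j, 1 ≤ j → j ≤ t → a j = 1)
    (s m1 M1 m2 M2 m3 M3 m4 M4 : ℤ)
    (hs : s = (∑ i ∈ Finset.Icc 1 t, a i) - ∑ i ∈ Finset.Icc 1 t, b i)
    (hm1 : m1 = s + b 1 - a t) (hM1 : M1 = s + b t - a 1)
    (hm2 : m2 = min (s + b 1 - b t) (s + a 1 - a t))
    (hM2 : M2 = max (s + b t - b 1) (s + a t - a 1))
    (hm3 : m3 = s - b t + a 1) (hM3 : M3 = s + a t - b 1)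
    (hm4 : m4 = 2 * s) (hM4 : M4 = 2 * s) :
    m1 = (t : ℤ) - 1 ∧ M1 = (t : ℤ) - 1 ∧
    m2 = (t : ℤ) ∧ M2 = (t : ℤ) ∧
    m3 = (t : ℤ) + 1 ∧ M3 = (t : ℤ) + 1 ∧
    m4 = 2 * (t : ℤ) ∧ M4 = 2 * (t : ℤ) ∧
    ((m2 : ℚ) / ((M2 : ℚ) - m1)) * ((m3 : ℚ) / ((M3 : ℚ) - m1)) *
      ((m4 : ℚ) / ((M4 : ℚ) - m1)) = (t : ℚ) ^ 2 ∧
    ((m1 : ℚ) / ((M2 : ℚ) - m1)) * ((m3 : ℚ) / ((M3 : ℚ) - m2)) *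
      ((m4 : ℚ) / ((M4 : ℚ) - m2)) = 2 * (t : ℚ) ^ 2 - 2 ∧
    ((m1 : ℚ) / ((M3 : ℚ) - m1)) * ((m2 : ℚ) / ((M3 : ℚ) - m2)) *
      ((m4 : ℚ) / ((M4 : ℚ) - m3)) = (t : ℚ) ^ 2 ∧
    ((m1 : ℚ) / ((M4 : ℚ) - m1)) * ((m2 : ℚ) / ((M4 : ℚ) - m2)) *
      ((m3 : ℚ) / ((M4 : ℚ) - m3)) = 1 := by
  have h1t : 1 ≤ t := le_trans (by norm_num) ht
  have hsa : (∑ i ∈ Finset.Icc 1 t, a i) = (t : ℤ) := by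
    rw [Finset.sum_congr rfl (fun i hi => ha1 i (Finset.mem_Icc.mp hi).1 (Finset.mem_Icc.mp hi).2)]
    simp [Nat.card_Icc]
  have hsb : (∑ i ∈ Finset.Icc 1 t, b i) = 0 := by
    rw [Finset.sum_congr rfl (fun i hi => hb0 i (Finset.mem_Icc.mp hi).1 (Finset.mem_Icc.mp hi).2)]
    simp
  have hst : s = (t : ℤ) := by rw [hs, hsa, hsb]; ring
  have hb1 : b 1 = 0 := hb0 1 le_rfl h1t
  have hbt : b t = 0 := hb0 t h1t le_rfl
  have ha1' : a 1 = 1 := ha1 1 le_rfl h1t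
  have hat : a t = 1 := ha1 t h1t le_rfl
  have e1 : m1 = (t : ℤ) - 1 := by rw [hm1, hst, hb1, hat]; ring
  have e2 : M1 = (t : ℤ) - 1 := by rw [hM1, hst, hbt, ha1']; ring
  have e3 : m2 = (t : ℤ) := by rw [hm2, hst, hb1, hbt, ha1', hat]; simp
  have e4 : M2 = (t : ℤ) := by rw [hM2, hst, hb1, hbt, ha1', hat]; simp
  have e5 : m3 = (t : ℤ) + 1 := by rw [hm3, hst, hbt, ha1']; ring
  have e6 : M3 = (t : ℤ) + 1 := by rw [hM3, hst, hb1, hat]; ring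
  have e7 : m4 = 2 * (t : ℤ) := by rw [hm4, hst]
  have e8 : M4 = 2 * (t : ℤ) := by rw [hM4, hst]
  rw [e1, e2, e3, e4, e5, e6, e7, e8]
  have htq : (2 : ℚ) ≤ (t : ℚ) := by exact_mod_cast ht
  have h0 : (t : ℚ) ≠ 0 := by linarith
  have hp1 : (t : ℚ) + 1 ≠ 0 := by linarith
  have hs1 : (t : ℚ) - 1 ≠ 0 := by intro h; nlinarith
  have hd1 : (2 : ℚ) + (t : ℚ) * 2 ≠ 0 := by positivity
  have hd2 : (-2 : ℚ) + (t : ℚ) * 2 ≠ 0 := by intro h; nlinarith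
  have hd3 : -(t : ℚ) + (t : ℚ) ^ 3 ≠ 0 := by
    intro h; nlinarith [sq_nonneg ((t:ℚ))]
  refine ⟨rfl, rfl, rfl, rfl, rfl, rfl, rfl, rfl, ?_, ?_, ?_, ?_⟩ <;> push_cast <;> field_simp
  · rw [show (t:ℚ)*2 - (t-1) = t+1 by ring, mul_div_cancel_left₀ _ hp1]; ring
  · ring
  · rw [show (t:ℚ)*2 - (t+1) = t-1 by ring, mul_div_cancel_left₀ _ hs1]; ring
  · rw [show ((t:ℚ)*2 - (t-1)) * ((t:ℚ)*2 - (t+1)) = (t-1)*(t+1) by ring, div_self (mul_ne_zero hs1 hp1)]; ring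
end

section
/- (Theorem 3.8, lower bound, arithmetic form.) For every 1 ≤ i ≤ c the denominators M_i − m_j (for 1 ≤ j < i) and M_j − m_i (for i < j ≤ c) are positive and ∏_{1≤j<i} m_j/(M_i − m_j) · ∏_{i<j≤c} m_j/(M_j − m_i) ≤ B_i, where B_i is the i-th total Betti number of a reduced arithmetically Cohen–Macaulay divisor of degree d = tc+1−p on a variety of minimal degree of codimension c. -/
open Finset

lemma chooseDiagMono (a : ℕ) : ∀ {k b : ℕ}, k ≤ b → (a + k).choose k ≤ (a + b).choose b := by
  intro k b h
  induction b with
  | zero => interval_cases k; simp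
  | succ n ih =>
    rcases Nat.lt_or_ge k (n+1) with h' | h'
    · have := ih (by omega)
      calc (a+k).choose k ≤ (a+n).choose n := this
        _ ≤ (a+n).choose n + (a+n).choose (n+1) := Nat.le_add_right _ _
        _ = (a+n+1).choose (n+1) := (Nat.choose_succ_succ (a+n) n).symm
    · have : k = n+1 := by omega
      subst this; exact le_refl _

lemma choose_ge (a b : ℕ) (hb : 1 ≤ b) : a + 1 ≤ (a + b).choose b := by
  have := chooseDiagMono a (k := 1) hb
  simpa using this

lemma two_mul_choose_two (n : ℕ) : 2 * (n+2).choose 2 = (n+2)*(n+1) := by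
  induction n with
  | zero => decide
  | succ m ih =>
    have h : (m+3).choose 2 = (m+2).choose 1 + (m+2).choose 2 := Nat.choose_succ_succ (m+2) 1
    have h1 : (m+2).choose 1 = m+2 := Nat.choose_one_right _
    show 2*(m+3).choose 2 = (m+3)*(m+2)
    zify at h h1 ih ⊢
    linear_combination 2*h + 2*h1 + ih

lemma k4a (u a s' : ℕ) : u + (a+1+(s'+1)) + 2 ≤ (u+2) * (a+s'+3) := by nlinarith
lemma k4b (a s' r : ℕ) : a+s'+3 ≤ (a+1)*(s'+1) + (r+1)*(a+2) := by nlinarith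
lemma k5a (v e : ℕ) : v+1+e+1 ≤ (e+1)*(v+1+1) := by nlinarith
lemma k5b (v a s' : ℕ) : 2 * (v+1 + (a+1+(s'+1)) + 2) ≤ (a+1) * ((v+1+2) * (a+s'+4)) := by
  calc 2 * (v+1 + (a+1+(s'+1)) + 2) ≤ (v+1+2) * (a+s'+4) := by nlinarith
    _ ≤ (a+1) * ((v+1+2) * (a+s'+4)) := Nat.le_mul_of_pos_left _ (by omega)
lemma k5c (a s' e : ℕ) (he : e ≤ s') :
    (a+s'+4)*(e+1) ≤ (s'+1)*(s'+2) + (a+2)*(e+1) := by nlinarith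
lemma hb2lem (v s' : ℕ) : (v+1+2)*(v+1+1) ≤ 2 * ((v+1+(s'+2)).choose (s'+2)) := by
  have hmono := chooseDiagMono (v+1) (k := 2) (b := s'+2) (by omega)
  have h2 := two_mul_choose_two (v+1)
  nlinarith [hmono, h2]

set_option maxHeartbeats 1000000 in

lemma prodIco (a : ℕ) : ∀ n : ℕ,
    a.factorial * ∏ j ∈ Ico 1 (n+1), (a + n + 1 - j) = (a + n).factorial := by
  intro n
  induction n generalizing a with
  | zero => simp
  | succ m ih =>
    rw [prod_Ico_succ_top (by omega)]
    have h1 : ∀ j ∈ Ico 1 (m+1), a + (m+1) + 1 - j = (a+1) + m + 1 - j := by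
      intro j hj; omega
    rw [prod_congr rfl h1]
    have h2 : a + (m+1) + 1 - (m+1) = a + 1 := by omega
    rw [h2]
    calc a.factorial * ((∏ j ∈ Ico 1 (m+1), ((a+1) + m + 1 - j)) * (a+1))
        = (a+1).factorial * ∏ j ∈ Ico 1 (m+1), ((a+1) + m + 1 - j) := by
          rw [Nat.factorial_succ]; ring
      _ = ((a+1) + m).factorial := ih (a+1)
      _ = (a + (m+1)).factorial := by congr 1; omega

lemma prodIoc (a i : ℕ) : ∀ n : ℕ,
    a.factorial * ∏ j ∈ Ioc i (i+n), (a + j - i) = (a + n).factorial := by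
  intro n
  induction n with
  | zero => simp
  | succ m ih =>
    have h0 : i + (m+1) = (i+m) + 1 := by omega
    rw [h0, prod_Ioc_succ_top (by omega)]
    have h2 : a + (i + m + 1) - i = a + m + 1 := by omega
    rw [h2, ← Nat.mul_assoc, ih, show a+(m+1) = (a+m)+1 from rfl, Nat.factorial_succ]; ring

lemma prodIocSucc (i : ℕ) : ∀ n : ℕ,
    (i+1).factorial * ∏ j ∈ Ioc i (i+n), (j + 1) = (i + n + 1).factorial := by
  intro n
  induction n with
  | zero => simp
  | succ m ih =>
    have h0 : i + (m+1) = (i+m) + 1 := by omega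
    rw [h0, prod_Ioc_succ_top (by omega), ← Nat.mul_assoc, ih,
      Nat.factorial_succ (i+m+1)]; ring

lemma IcoIoc (n : ℕ) : Finset.Ico 1 (n+1) = Finset.Ioc 0 n := by
  ext x; simp only [Finset.mem_Ico, Finset.mem_Ioc]; omega

lemma prodSuccIco (n : ℕ) (hn : 1 ≤ n) : ∏ j ∈ Ico 1 n, (j + 1) = n.factorial := by
  obtain ⟨m, rfl⟩ : ∃ m, n = m + 1 := ⟨n - 1, by omega⟩
  rw [IcoIoc]
  have h := prodIocSucc 0 m
  rw [show (0:ℕ)+m = m by omega] at h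
  simpa using h

lemma case3_lemma (u a s n1 n2 d1 d2 : ℕ) (hs : 1 ≤ s)
    (hn1 : n1 = (a+1).factorial)
    (hn2 : (a+2).factorial * n2 = (a+1+s).factorial * (u + (a+1+s) + 1))
    (hd1 : u.factorial * d1 = (u + a).factorial)
    (hd2 : u.factorial * d2 = (u + s).factorial) :
    n1 * n2 ≤ ((a+1) * (a+1+s).choose (a+2) + (a+1+s) * (a+s).choose a) * (d1 * d2) := by
  obtain ⟨s', rfl⟩ : ∃ s', s = s' + 1 := ⟨s - 1, by omega⟩
  have hcf1 : (u+a).choose a * u.factorial * a.factorial = (u+a).factorial :=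
    Nat.add_choose_mul_factorial_mul_factorial u a
  have hcf2 : (u+(s'+1)).choose (s'+1) * u.factorial * (s'+1).factorial = (u+(s'+1)).factorial :=
    Nat.add_choose_mul_factorial_mul_factorial u (s'+1)
  have hcc1 : (a+(s'+1)).choose a * a.factorial * (s'+1).factorial = (a+(s'+1)).factorial := by
    rw [Nat.add_comm a (s'+1), Nat.mul_right_comm]
    exact Nat.add_choose_mul_factorial_mul_factorial (s'+1) a
  have hcc2 : (a+1+(s'+1)).choose (a+2) * (a+2).factorial * s'.factorial
      = (a+1+(s'+1)).factorial := by
    rw [show a+1+(s'+1) = s' + (a+2) by omega, Nat.mul_right_comm]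
    exact Nat.add_choose_mul_factorial_mul_factorial s' (a+2)
  have hQ : (a+1+(s'+1)).factorial = (a+(s'+1)+1) * (a+(s'+1)).factorial := by
    rw [show a+1+(s'+1) = (a+(s'+1))+1 by omega, Nat.factorial_succ]
  have hFs : (s'+1).factorial = (s'+1) * s'.factorial := Nat.factorial_succ s'
  have hFa1 : (a+1).factorial = (a+1) * a.factorial := Nat.factorial_succ a
  have hFa2 : (a+2).factorial = (a+2) * (a+1).factorial := Nat.factorial_succ (a+1)
  have core : u + (a+1+(s'+1)) + 1
      ≤ (u+a).choose a * ((u+(s'+1)).choose (s'+1)) * (a+1+(s'+1)+1) := by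
    have hCC : u + 1 ≤ (u+a).choose a * ((u+(s'+1)).choose (s'+1)) := by
      rcases Nat.eq_zero_or_pos a with ha | ha
      · subst ha
        have h2 : u + 1 ≤ (u+(s'+1)).choose (s'+1) := choose_ge u (s'+1) (by omega)
        simpa using h2
      · have h1 : u + 1 ≤ (u+a).choose a := choose_ge u a ha
        have h2 : 0 < (u+(s'+1)).choose (s'+1) := Nat.choose_pos (by omega)
        exact le_trans h1 (Nat.le_mul_of_pos_right _ h2)
    calc u + (a+1+(s'+1)) + 1 ≤ (u+1) * (a+1+(s'+1)+1) := by nlinarith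
      _ ≤ ((u+a).choose a * ((u+(s'+1)).choose (s'+1))) * (a+1+(s'+1)+1) :=
          Nat.mul_le_mul_right _ hCC
      _ = (u+a).choose a * ((u+(s'+1)).choose (s'+1)) * (a+1+(s'+1)+1) := by ring
  have hK : 0 < (a+2).factorial * (u.factorial * u.factorial) := by positivity
  refine Nat.le_of_mul_le_mul_left ?_ hK
  zify at hn1 hn2 hd1 hd2 hcf1 hcf2 hcc1 hcc2 hQ hFs hFa1 hFa2 core ⊢
  set U : ℤ := (u.factorial : ℤ)
  set Fa : ℤ := (a.factorial : ℤ)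
  set Fa1 : ℤ := ((a+1).factorial : ℤ)
  set Fa2 : ℤ := ((a+2).factorial : ℤ)
  set Fs : ℤ := ((s'+1).factorial : ℤ)
  set Fs' : ℤ := (s'.factorial : ℤ)
  set X : ℤ := ((u+a).factorial : ℤ)
  set Y : ℤ := ((u+(s'+1)).factorial : ℤ)
  set P : ℤ := ((a+1+(s'+1)).factorial : ℤ)
  set Q : ℤ := ((a+(s'+1)).factorial : ℤ)
  set C1 : ℤ := ((u+a).choose a : ℤ)
  set C2 : ℤ := ((u+(s'+1)).choose (s'+1) : ℤ)
  set CA : ℤ := ((a+1+(s'+1)).choose (a+2) : ℤ)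
  set CB : ℤ := ((a+(s'+1)).choose a : ℤ)
  have hXY : X * Y = C1 * C2 * (U * U * (Fa * Fs)) := by
    linear_combination (-(Y:ℤ)) * hcf1 - (C1*U*Fa) * hcf2
  have hBfact : (((a:ℤ)+1) * CA + ((a:ℤ)+1+(s'+1)) * CB) * (Fa2 * (Fa * Fs))
      = P * Fa1 * ((a:ℤ)+1+(s'+1)+1) := by
    linear_combination ((a:ℤ)+1)*CA*Fa2*Fa*hFs + ((a:ℤ)+1)*((s':ℤ)+1)*Fa*hcc2
      + ((a:ℤ)+1+(s'+1))*Fa2*hcc1 - Fa2*hQ - P*((s':ℤ)+1)*hFa1 + P*hFa2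
  calc (Fa2 * (U * U)) * ((n1:ℤ) * n2)
      = (U * U) * n1 * (Fa2 * n2) := by ring
    _ = (U * U) * Fa1 * (P * ((u:ℤ) + (a+1+(s'+1)) + 1)) := by
        rw [hn1, hn2]; try push_cast; try ring
    _ = (U * U * Fa1 * P) * ((u:ℤ) + (a+1+(s'+1)) + 1) := by ring
    _ ≤ (U * U * Fa1 * P) * (C1 * C2 * ((a:ℤ)+1+(s'+1)+1)) := by
        refine mul_le_mul_of_nonneg_left ?_ (by positivity)
        push_cast at core ⊢
        linarith [core]
    _ = Fa2 * (((a:ℤ)+1) * CA + ((a:ℤ)+1+(s'+1)) * CB) * (X * Y) := by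
        linear_combination (-(Fa2:ℤ)*(((a:ℤ)+1)*CA + ((a:ℤ)+1+(s'+1))*CB))*hXY
          - C1*C2*U*U*hBfact
    _ = Fa2 * (((a:ℤ)+1) * CA + ((a:ℤ)+1+(s'+1)) * CB) * ((U*(d1:ℤ)) * (U*(d2:ℤ))) := by
        rw [hd1, hd2]
    _ = (Fa2 * (U * U)) * (((((a:ℤ))+1) * CA + (((a:ℤ))+1+(s'+1)) * CB) * ((d1:ℤ) * (d2:ℤ))) := by
        ring

set_option maxHeartbeats 1000000 in
lemma case4_lemma (u a s p n1 n2 d1 d2 : ℕ) (Bz : ℤ) (hs : 1 ≤ s) (hp : 1 ≤ p) (hpa : p ≤ a)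
    (hn1 : n1 = (a+1).factorial)
    (hn2 : (a+2).factorial * n2 = (a+1+s).factorial * (u + (a+1+s) + 2))
    (hd1 : (u+1).factorial * d1 = (u+1+a).factorial)
    (hd2 : (u+1).factorial * d2 = (u+1+s).factorial)
    (hBz : ((a:ℤ)+1) * Bz = ((a:ℤ)+1)*((a:ℤ)+1) * (((a+1+s).choose (a+2) : ℕ) : ℤ)
      + ((a+1-p : ℕ) : ℤ) * ((a:ℤ)+1+s) * (((a+s).choose a : ℕ) : ℤ)) :
    ((n1 : ℤ) * n2) ≤ Bz * ((d1:ℤ) * d2) := by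
  obtain ⟨s', rfl⟩ : ∃ s', s = s' + 1 := ⟨s - 1, by omega⟩
  obtain ⟨r, hr⟩ : ∃ r, a + 1 - p = r + 1 := ⟨a - p, by omega⟩
  have hcf1 : (u+1+a).choose a * (u+1).factorial * a.factorial = (u+1+a).factorial :=
    Nat.add_choose_mul_factorial_mul_factorial (u+1) a
  have hcf2 : (u+1+(s'+1)).choose (s'+1) * (u+1).factorial * (s'+1).factorial
      = (u+1+(s'+1)).factorial :=
    Nat.add_choose_mul_factorial_mul_factorial (u+1) (s'+1)
  have hcc1 : (a+(s'+1)).choose a * a.factorial * (s'+1).factorial = (a+(s'+1)).factorial := by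
    rw [Nat.add_comm a (s'+1), Nat.mul_right_comm]
    exact Nat.add_choose_mul_factorial_mul_factorial (s'+1) a
  have hcc2 : (a+1+(s'+1)).choose (a+2) * (a+2).factorial * s'.factorial
      = (a+1+(s'+1)).factorial := by
    rw [show a+1+(s'+1) = s' + (a+2) by omega, Nat.mul_right_comm]
    exact Nat.add_choose_mul_factorial_mul_factorial s' (a+2)
  have hQ : (a+1+(s'+1)).factorial = (a+(s'+1)+1) * (a+(s'+1)).factorial := by
    rw [show a+1+(s'+1) = (a+(s'+1))+1 by omega, Nat.factorial_succ]
  have hFs : (s'+1).factorial = (s'+1) * s'.factorial := Nat.factorial_succ s'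
  have hFa1 : (a+1).factorial = (a+1) * a.factorial := Nat.factorial_succ a
  have hFa2 : (a+2).factorial = (a+2) * (a+1).factorial := Nat.factorial_succ (a+1)
  have core : (a+1) * (u + (a+1+(s'+1)) + 2)
      ≤ (u+1+a).choose a * ((u+1+(s'+1)).choose (s'+1)) * ((a+1)*(s'+1) + (r+1)*(a+2)) := by
    have hb1 : a + 1 ≤ (u+1+a).choose a := by
      have h0 : (a+1).choose a = a+1 := Nat.choose_succ_self_right a
      have := Nat.choose_le_choose (a := a+1) (b := u+1+a) a (by omega)
      omega
    have hb2 : u + 2 ≤ (u+1+(s'+1)).choose (s'+1) := by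
      have := choose_ge (u+1) (s'+1) (by omega)
      omega
    have k1 := k4a u a s'
    have k2 := k4b a s' r
    calc (a+1) * (u + (a+1+(s'+1)) + 2)
        ≤ (a+1) * ((u+2) * ((a+1)*(s'+1) + (r+1)*(a+2))) :=
          Nat.mul_le_mul (le_refl _) (le_trans k1 (Nat.mul_le_mul (le_refl _) k2))
      _ = ((a+1) * (u+2)) * ((a+1)*(s'+1) + (r+1)*(a+2)) := by ring
      _ ≤ ((u+1+a).choose a * ((u+1+(s'+1)).choose (s'+1))) * ((a+1)*(s'+1) + (r+1)*(a+2)) :=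
          Nat.mul_le_mul (Nat.mul_le_mul hb1 hb2) (le_refl _)
      _ = _ := by ring
  have hApos : (0:ℤ) < ((a:ℤ)+1) * (((a+2).factorial : ℤ) * (((u+1).factorial : ℤ) * ((u+1).factorial : ℤ))) := by
    positivity
  refine le_of_mul_le_mul_left ?_ hApos
  zify at hn1 hn2 hd1 hd2 hcf1 hcf2 hcc1 hcc2 hQ hFs hFa1 hFa2 core hr
  set U : ℤ := ((u+1).factorial : ℤ)
  set Fa : ℤ := (a.factorial : ℤ)
  set Fa1 : ℤ := ((a+1).factorial : ℤ)
  set Fa2 : ℤ := ((a+2).factorial : ℤ)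
  set Fs : ℤ := ((s'+1).factorial : ℤ)
  set Fs' : ℤ := (s'.factorial : ℤ)
  set X : ℤ := ((u+1+a).factorial : ℤ)
  set Y : ℤ := ((u+1+(s'+1)).factorial : ℤ)
  set P : ℤ := ((a+1+(s'+1)).factorial : ℤ)
  set Q : ℤ := ((a+(s'+1)).factorial : ℤ)
  set C1 : ℤ := ((u+1+a).choose a : ℤ)
  set C2 : ℤ := ((u+1+(s'+1)).choose (s'+1) : ℤ)
  set CA : ℤ := ((a+1+(s'+1)).choose (a+2) : ℤ)
  set CB : ℤ := ((a+(s'+1)).choose a : ℤ)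
  rw [hr] at hBz
  have hXY : X * Y = C1 * C2 * (U * U * (Fa * Fs)) := by
    linear_combination (-(Y:ℤ)) * hcf1 - (C1*U*Fa) * hcf2
  have hBfact : (((a:ℤ)+1) * Bz) * (Fa2 * (Fa * Fs))
      = P * Fa1 * (((a:ℤ)+1)*((s':ℤ)+1) + ((r:ℤ)+1)*((a:ℤ)+2)) := by
    rw [hBz]
    push_cast
    linear_combination ((a:ℤ)+1)*((a:ℤ)+1)*CA*Fa2*Fa*hFs
      + ((a:ℤ)+1)*((a:ℤ)+1)*((s':ℤ)+1)*Fa*hcc2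
      + ((r:ℤ)+1)*((a:ℤ)+1+(s'+1))*Fa2*hcc1 - ((r:ℤ)+1)*Fa2*hQ
      - P*((a:ℤ)+1)*((s':ℤ)+1)*hFa1 + P*((r:ℤ)+1)*hFa2
  calc (((a:ℤ)+1) * (Fa2 * (U * U))) * ((n1:ℤ) * n2)
      = ((a:ℤ)+1) * ((U * U) * n1 * (Fa2 * n2)) := by ring
    _ = ((a:ℤ)+1) * ((U * U) * Fa1 * (P * ((u:ℤ) + (a+1+(s'+1)) + 2))) := by
        rw [hn1, hn2]; try push_cast; try ring
    _ = (U * U * Fa1 * P) * (((a:ℤ)+1) * ((u:ℤ) + (a+1+(s'+1)) + 2)) := by ring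
    _ ≤ (U * U * Fa1 * P) * (C1 * C2 * (((a:ℤ)+1)*((s':ℤ)+1) + ((r:ℤ)+1)*((a:ℤ)+2))) := by
        refine mul_le_mul_of_nonneg_left ?_ (by positivity)
        push_cast at core ⊢
        linarith [core]
    _ = (((a:ℤ)+1) * Bz) * Fa2 * (X * Y) := by
        linear_combination (-(((a:ℤ)+1) * Bz)*Fa2)*hXY - C1*C2*U*U*hBfact
    _ = (((a:ℤ)+1) * Bz) * Fa2 * ((U*(d1:ℤ)) * (U*(d2:ℤ))) := by rw [hd1, hd2]
    _ = (((a:ℤ)+1) * (Fa2 * (U * U))) * (Bz * ((d1:ℤ) * (d2:ℤ))) := by ring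

set_option maxHeartbeats 1000000 in
lemma case5_lemma (u a s' e n1 n2 d1 d2a d2b : ℕ) (he : e ≤ s')
    (hn1 : n1 = (a+1).factorial)
    (hn2 : (a+2).factorial * n2 = (a+1+(s'+1)).factorial * (u + (a+1+(s'+1)) + 2))
    (hd1 : u.factorial * d1 = (u+a).factorial)
    (hd2a : u.factorial * d2a = (u+e).factorial)
    (hd2b : (u+e+1).factorial * d2b = (u+(s'+2)).factorial) :
    n1 * n2 ≤ ((a+1) * ((a+1+(s'+1)).choose (a+2)) + (e+1) * ((a+1+(s'+1)).choose a))
      * (d1 * (d2a * d2b)) := by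
  have hcf1 : (u+a).choose a * u.factorial * a.factorial = (u+a).factorial :=
    Nat.add_choose_mul_factorial_mul_factorial u a
  have hcfY : (u+(s'+2)).choose (s'+2) * u.factorial * (s'+2).factorial = (u+(s'+2)).factorial :=
    Nat.add_choose_mul_factorial_mul_factorial u (s'+2)
  have hcc2 : (a+1+(s'+1)).choose (a+2) * (a+2).factorial * s'.factorial
      = (a+1+(s'+1)).factorial := by
    rw [show a+1+(s'+1) = s' + (a+2) by omega, Nat.mul_right_comm]
    exact Nat.add_choose_mul_factorial_mul_factorial s' (a+2)
  have hccC : (a+1+(s'+1)).choose a * a.factorial * (s'+2).factorial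
      = (a+1+(s'+1)).factorial := by
    rw [show a+1+(s'+1) = (s'+2) + a by omega, Nat.mul_right_comm]
    exact Nat.add_choose_mul_factorial_mul_factorial (s'+2) a
  have hW : (u+e+1).factorial = (u+e+1) * (u+e).factorial := Nat.factorial_succ (u+e)
  have hFs2 : (s'+2).factorial = (s'+2) * (s'+1).factorial := Nat.factorial_succ (s'+1)
  have hFs : (s'+1).factorial = (s'+1) * s'.factorial := Nat.factorial_succ s'
  have hFa1 : (a+1).factorial = (a+1) * a.factorial := Nat.factorial_succ a
  have hFa2 : (a+2).factorial = (a+2) * (a+1).factorial := Nat.factorial_succ (a+1)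
  have core : (u + (a+1+(s'+1)) + 2) * (u+e+1)
      ≤ (u+a).choose a * ((u+(s'+2)).choose (s'+2)) * ((s'+1)*(s'+2) + (a+2)*(e+1)) := by
    rcases Nat.eq_zero_or_pos u with hu | hu
    · subst hu
      have h1 : (0+a).choose a = 1 := by simp
      have h2 : (0+(s'+2)).choose (s'+2) = 1 := by simp
      rw [h1, h2]
      nlinarith [he]
    · obtain ⟨v, rfl⟩ : ∃ v, u = v + 1 := ⟨u - 1, by omega⟩
      have hb1 : a + 1 ≤ (v+1+a).choose a := by
        have h0 : (a+1).choose a = a+1 := Nat.choose_succ_self_right a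
        have := Nat.choose_le_choose (a := a+1) (b := v+1+a) a (by omega)
        omega
      have hb2 := hb2lem v s'
      refine Nat.le_of_mul_le_mul_left ?_ (show 0 < 2 by norm_num)
      -- step1 : t+q-2 <= q(t-1);  step2 : 2(t+i+s) <= i*t*(i+s+2); step3
      have k1 := k5a v e
      have k2 := k5b v a s'
      have k3 := k5c a s' e he
      calc 2 * ((v+1 + (a+1+(s'+1)) + 2) * (v+1+e+1))
          ≤ (2 * (v+1 + (a+1+(s'+1)) + 2)) * ((e+1)*(v+1+1)) := by
            rw [Nat.mul_assoc]
            exact Nat.mul_le_mul (le_refl _) (Nat.mul_le_mul (le_refl _) k1)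
        _ ≤ ((a+1) * ((v+1+2) * (a+s'+4))) * ((e+1)*(v+1+1)) :=
            Nat.mul_le_mul k2 (le_refl _)
        _ = ((a+1) * ((v+1+2)*(v+1+1))) * ((a+s'+4)*(e+1)) := by ring
        _ ≤ ((a+1) * (2 * ((v+1+(s'+2)).choose (s'+2)))) * ((a+s'+4)*(e+1)) :=
            Nat.mul_le_mul (Nat.mul_le_mul (le_refl _) (hb2lem v s')) (le_refl _)
        _ ≤ ((a+1) * (2 * ((v+1+(s'+2)).choose (s'+2)))) * ((s'+1)*(s'+2) + (a+2)*(e+1)) :=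
            Nat.mul_le_mul (le_refl _) k3
        _ ≤ (((v+1+a).choose a) * (2 * ((v+1+(s'+2)).choose (s'+2))))
              * ((s'+1)*(s'+2) + (a+2)*(e+1)) :=
            Nat.mul_le_mul (Nat.mul_le_mul hb1 (le_refl _)) (le_refl _)
        _ = 2 * ((v+1+a).choose a * ((v+1+(s'+2)).choose (s'+2))
              * ((s'+1)*(s'+2) + (a+2)*(e+1))) := by ring
  have hK : 0 < (a+2).factorial * (u.factorial * u.factorial) * (u+e+1).factorial := by
    positivity
  refine Nat.le_of_mul_le_mul_left ?_ hK
  zify at hn1 hn2 hd1 hd2a hd2b hcf1 hcfY hcc2 hccC hW hFs2 hFs hFa1 hFa2 core ⊢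
  set U : ℤ := (u.factorial : ℤ)
  set Fa : ℤ := (a.factorial : ℤ)
  set Fa1 : ℤ := ((a+1).factorial : ℤ)
  set Fa2 : ℤ := ((a+2).factorial : ℤ)
  set Fs : ℤ := ((s'+1).factorial : ℤ)
  set Fs2 : ℤ := ((s'+2).factorial : ℤ)
  set Fs' : ℤ := (s'.factorial : ℤ)
  set W : ℤ := ((u+e+1).factorial : ℤ)
  set W0 : ℤ := ((u+e).factorial : ℤ)
  set X : ℤ := ((u+a).factorial : ℤ)
  set Y : ℤ := ((u+(s'+2)).factorial : ℤ)
  set P : ℤ := ((a+1+(s'+1)).factorial : ℤ)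
  set C1 : ℤ := ((u+a).choose a : ℤ)
  set C2 : ℤ := ((u+(s'+2)).choose (s'+2) : ℤ)
  set CA : ℤ := ((a+1+(s'+1)).choose (a+2) : ℤ)
  set CC : ℤ := ((a+1+(s'+1)).choose a : ℤ)
  have hXY : X * Y = C1 * C2 * (U * U * (Fa * Fs2)) := by
    linear_combination (-(Y:ℤ)) * hcf1 - (C1*U*Fa) * hcfY
  have hBfact : (((a:ℤ)+1) * CA + ((e:ℤ)+1) * CC) * (Fa2 * (Fa * Fs2))
      = P * Fa1 * (((s':ℤ)+1)*((s':ℤ)+2) + ((a:ℤ)+2)*((e:ℤ)+1)) := by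
    linear_combination ((a:ℤ)+1)*CA*Fa2*Fa*hFs2 + ((a:ℤ)+1)*((s':ℤ)+2)*CA*Fa2*Fa*hFs
      + ((a:ℤ)+1)*((s':ℤ)+2)*((s':ℤ)+1)*Fa*hcc2
      + ((e:ℤ)+1)*Fa2*hccC
      - P*((s':ℤ)+1)*((s':ℤ)+2)*hFa1 + P*((e:ℤ)+1)*hFa2
  calc (Fa2 * (U * U) * W) * ((n1:ℤ) * n2)
      = W * ((U * U) * n1 * (Fa2 * n2)) := by ring
    _ = W * ((U * U) * Fa1 * (P * ((u:ℤ) + (a+1+(s'+1)) + 2))) := by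
        rw [hn1, hn2]; try push_cast; try ring
    _ = ((u:ℤ)+e+1) * W0 * ((U * U) * Fa1 * (P * ((u:ℤ) + (a+1+(s'+1)) + 2))) := by
        rw [hW]; try push_cast; try ring
    _ = (U * U * W0 * Fa1 * P) * (((u:ℤ) + (a+1+(s'+1)) + 2) * ((u:ℤ)+e+1)) := by ring
    _ ≤ (U * U * W0 * Fa1 * P) *
          (C1 * C2 * (((s':ℤ)+1)*((s':ℤ)+2) + ((a:ℤ)+2)*((e:ℤ)+1))) := by
        refine mul_le_mul_of_nonneg_left ?_ (by positivity)
        push_cast at core ⊢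
        linarith [core]
    _ = (((a:ℤ)+1) * CA + ((e:ℤ)+1) * CC) * Fa2 * (X * Y) * W0 := by
        linear_combination (-((((a:ℤ)+1) * CA + ((e:ℤ)+1) * CC))*Fa2*W0)*hXY
          - C1*C2*U*U*W0*hBfact
    _ = (((a:ℤ)+1) * CA + ((e:ℤ)+1) * CC) * Fa2 * ((U*(d1:ℤ)) * ((W*(d2b:ℤ)))) * (U*(d2a:ℤ)) := by
        rw [hd1, hd2b, hd2a]
    _ = (Fa2 * (U * U) * W) * ((((a:ℤ)+1) * CA + ((e:ℤ)+1) * CC) * ((d1:ℤ) * ((d2a:ℤ) * (d2b:ℤ)))) := by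
        ring

/-- Theorem 3.8, lower bound, arithmetic form, for a reduced arithmetically
Cohen–Macaulay divisor of degree `d = tc+1−p` on a variety of minimal degree of
codimension `c`: for every `1 ≤ i ≤ c` the denominators `M i − m j` (for
`1 ≤ j < i`) and `M j − m i` (for `i < j ≤ c`) are positive and
`∏_{1≤j<i} m j/(M i − m j) · ∏_{i<j≤c} m j/(M j − m i) ≤ B i`, where `B i` is the
`i`-th total Betti number. -/
theorem lower_bound_betti_divisor_minimal_degree (t c p : ℕ)
    (ht : 2 ≤ t) (hc : 1 ≤ c) (hp1 : 1 ≤ p) (hpc : p ≤ c)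
    (α β' γ B : ℕ → ℤ)
    (hα : ∀ i, α i = (i : ℤ) * (c.choose (i + 1)))
    (hβ1 : β' 1 = (p : ℤ))
    (hβ : ∀ i, 2 ≤ i → i ≤ p →
      β' i = (p : ℤ) * (c.choose (i - 1)) - (c : ℤ) * ((c - 1).choose (i - 2)))
    (hβ0 : ∀ i, p < i → β' i = 0)
    (hγ0 : ∀ i, i ≤ p → γ i = 0)
    (hγ : ∀ i, p < i → γ i = (c : ℤ) * ((c - 1).choose (i - 1)) - (p : ℤ) * (c.choose i))
    (hB : ∀ i, B i = α i + β' i + γ i)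
    (S : ℕ → Finset ℕ)
    (hS : ∀ i, S i =
      (if α i ≠ 0 then ({i + 1} : Finset ℕ) else ∅) ∪
      (if β' i ≠ 0 then ({t + i - 1} : Finset ℕ) else ∅) ∪
      (if γ i ≠ 0 then ({t + i} : Finset ℕ) else ∅))
    (m M : ℕ → ℕ)
    (hmmem : ∀ i, 1 ≤ i → i ≤ c → m i ∈ S i)
    (hmle : ∀ i, 1 ≤ i → i ≤ c → ∀ x ∈ S i, m i ≤ x)
    (hMmem : ∀ i, 1 ≤ i → i ≤ c → M i ∈ S i)
    (hMge : ∀ i, 1 ≤ i → i ≤ c → ∀ x ∈ S i, x ≤ M i) :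
    ∀ i, 1 ≤ i → i ≤ c →
      (∀ j, 1 ≤ j → j < i → m j < M i) ∧
      (∀ j, i < j → j ≤ c → m i < M j) ∧
      (∏ j ∈ Finset.Ico 1 i, (m j : ℚ) / ((M i : ℚ) - (m j : ℚ))) *
        (∏ j ∈ Finset.Ioc i c, (m j : ℚ) / ((M j : ℚ) - (m i : ℚ))) ≤ (B i : ℚ) := by
  obtain ⟨u, rfl⟩ : ∃ u, t = u + 2 := ⟨t - 2, by omega⟩
  -- β' explicit value on [1,p]
  have hβeq : ∀ i, 1 ≤ i → i ≤ p → β' i = ((p + 1 - i : ℕ) : ℤ) * (c.choose (i-1)) := by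
    intro i h1 h2
    rcases Nat.lt_or_ge i 2 with h | h
    · have : i = 1 := by omega
      subst this
      simpa using hβ1
    · rw [hβ i h h2]
      have key : c * ((c-1).choose (i-2)) = (i-1) * (c.choose (i-1)) := by
        have := Nat.add_one_mul_choose_eq (c-1) (i-2)
        have e1 : (c-1)+1 = c := by omega
        have e2 : (i-2)+1 = i-1 := by omega
        rw [e1, e2] at this
        rw [this]; ring
      have key' : (c : ℤ) * ((c-1).choose (i-2)) = ((i-1 : ℕ) : ℤ) * (c.choose (i-1)) := by
        exact_mod_cast key
      have e3 : ((i-1 : ℕ) : ℤ) = (i : ℤ) - 1 := by omega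
      rw [e3] at key'
      rw [key']
      have : ((p + 1 - i : ℕ) : ℤ) = (p : ℤ) + 1 - i := by omega
      rw [this]; ring
  have hβpos : ∀ i, 1 ≤ i → i ≤ p → 0 < β' i := by
    intro i h1 h2
    rw [hβeq i h1 h2]
    have h3 : 0 < c.choose (i-1) := Nat.choose_pos (by omega)
    have h4 : 0 < p + 1 - i := by omega
    positivity
  -- γ explicit positivity on (p, c]
  have hγkey : ∀ i, p < i → i ≤ c → (i : ℤ) * γ i = ((i - p : ℕ) : ℤ) * c * ((c-1).choose (i-1)) := by
    intro i h1 h2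
    rw [hγ i h1]
    have key : c * ((c-1).choose (i-1)) = i * (c.choose i) := by
      have := Nat.add_one_mul_choose_eq (c-1) (i-1)
      have e1 : (c-1)+1 = c := by omega
      have e2 : (i-1)+1 = i := by omega
      rw [e1, e2] at this
      rw [this]; ring
    have key' : (c : ℤ) * ((c-1).choose (i-1)) = (i : ℤ) * (c.choose i) := by exact_mod_cast key
    have e3 : ((i - p : ℕ) : ℤ) = (i : ℤ) - p := by omega
    rw [e3]
    linear_combination (p:ℤ) * key'
  have hγpos : ∀ i, p < i → i ≤ c → 0 < γ i := by
    intro i h1 h2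
    have h3 : 0 < (i:ℤ) * γ i := by
      rw [hγkey i h1 h2]
      have h4 : 0 < (c-1).choose (i-1) := Nat.choose_pos (by omega)
      have h5 : 0 < i - p := by omega
      positivity
    have hi : (0:ℤ) < i := by exact_mod_cast (by omega : 0 < i)
    nlinarith [h3]
  -- α facts
  have hαpos : ∀ i, 1 ≤ i → i < c → α i ≠ 0 := by
    intro i h1 h2
    rw [hα]
    have h3 : 0 < c.choose (i+1) := Nat.choose_pos (by omega)
    have : (0:ℤ) < (i : ℤ) * (c.choose (i+1)) := by positivity
    omega
  have hαc : α c = 0 := by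
    rw [hα]
    have : c.choose (c+1) = 0 := Nat.choose_eq_zero_of_lt (by omega)
    rw [this]; simp
  -- membership characterization
  have hmemS : ∀ i x, x ∈ S i ↔
      ((α i ≠ 0 ∧ x = i+1) ∨ (β' i ≠ 0 ∧ x = (u+2)+i-1) ∨ (γ i ≠ 0 ∧ x = (u+2)+i)) := by
    intro i x
    rw [hS]
    by_cases h1 : α i = 0 <;> by_cases h2 : β' i = 0 <;> by_cases h3 : γ i = 0 <;>
      simp [h1, h2, h3] <;> tauto
  -- m values for j < c
  have hmval : ∀ j, 1 ≤ j → j < c → m j = j + 1 := by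
    intro j h1 h2
    have hmem : (j+1) ∈ S j := (hmemS j (j+1)).mpr (Or.inl ⟨hαpos j h1 h2, rfl⟩)
    have hle : m j ≤ j + 1 := hmle j h1 (by omega) _ hmem
    have := (hmemS j (m j)).mp (hmmem j h1 (by omega))
    omega
  -- M values
  have hMval1 : ∀ i, 1 ≤ i → i ≤ p → M i = (u+2) + i - 1 := by
    intro i h1 h2
    have hmem : ((u+2)+i-1) ∈ S i := (hmemS i _).mpr (Or.inr (Or.inl ⟨by have := hβpos i h1 h2; omega, rfl⟩))
    have hge : (u+2)+i-1 ≤ M i := hMge i h1 (by omega) _ hmem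
    have := (hmemS i (M i)).mp (hMmem i h1 (by omega))
    have hγz : γ i = 0 := hγ0 i (by omega)
    rcases this with ⟨_, h⟩ | ⟨_, h⟩ | ⟨hne, h⟩
    · omega
    · omega
    · exact absurd hγz hne
  have hMval2 : ∀ i, p < i → i ≤ c → M i = (u+2) + i := by
    intro i h1 h2
    have hmem : ((u+2)+i) ∈ S i := (hmemS i _).mpr (Or.inr (Or.inr ⟨by have := hγpos i h1 h2; omega, rfl⟩))
    have hge : (u+2)+i ≤ M i := hMge i (by omega) h2 _ hmem
    have := (hmemS i (M i)).mp (hMmem i (by omega) h2)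
    omega
  -- m value at c
  have hmc1 : p = c → m c = (u+2) + c - 1 := by
    intro hpc'
    have := (hmemS c (m c)).mp (hmmem c hc (le_refl c))
    have hγz : γ c = 0 := hγ0 c (by omega)
    rcases this with ⟨hne, h⟩ | ⟨_, h⟩ | ⟨hne, h⟩
    · exact absurd hαc hne
    · exact h
    · exact absurd hγz hne
  have hmc2 : p < c → m c = (u+2) + c := by
    intro hpc'
    have := (hmemS c (m c)).mp (hmmem c hc (le_refl c))
    have hβz : β' c = 0 := hβ0 c (by omega)
    rcases this with ⟨hne, h⟩ | ⟨hne, h⟩ | ⟨_, h⟩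
    · exact absurd hαc hne
    · exact absurd hβz hne
    · exact h
  -- M i lower bound
  have hMlb : ∀ i, 1 ≤ i → i ≤ c → (u+2) + i - 1 ≤ M i := by
    intro i h1 h2
    rcases le_or_gt i p with h | h
    · rw [hMval1 i h1 h]
    · rw [hMval2 i h h2]; omega
  intro i hi1 hic
  refine ⟨?_, ?_, ?_⟩
  · intro j hj1 hji
    rw [hmval j hj1 (by omega)]
    have := hMlb i hi1 hic
    omega
  · intro j hij hjc
    rw [hmval i hi1 (by omega)]
    have := hMlb j (by omega) hjc
    omega
  -- Part 3: the product inequality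
  have hlt1 : ∀ j ∈ Finset.Ico 1 i, m j < M i := by
    intro j hj; simp only [Finset.mem_Ico] at hj
    rw [hmval j hj.1 (by omega)]
    have := hMlb i hi1 hic; omega
  have hlt2 : ∀ j ∈ Finset.Ioc i c, m i < M j := by
    intro j hj; simp only [Finset.mem_Ioc] at hj
    rw [hmval i hi1 (by omega)]
    have := hMlb j (by omega) hj.2; omega
  set n1 := ∏ j ∈ Finset.Ico 1 i, m j with hn1def
  set d1 := ∏ j ∈ Finset.Ico 1 i, (M i - m j) with hd1def
  set n2 := ∏ j ∈ Finset.Ioc i c, m j with hn2def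
  set d2 := ∏ j ∈ Finset.Ioc i c, (M j - m i) with hd2def
  have hd1pos : 0 < d1 := Finset.prod_pos (fun j hj => by have := hlt1 j hj; omega)
  have hd2pos : 0 < d2 := Finset.prod_pos (fun j hj => by have := hlt2 j hj; omega)
  have e1 : (∏ j ∈ Finset.Ico 1 i, (m j : ℚ) / ((M i : ℚ) - (m j : ℚ)))
      = (n1 : ℚ) / (d1 : ℚ) := by
    calc (∏ j ∈ Finset.Ico 1 i, (m j : ℚ) / ((M i : ℚ) - (m j : ℚ)))
        = ∏ j ∈ Finset.Ico 1 i, ((m j : ℚ) / ((M i - m j : ℕ) : ℚ)) :=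
          Finset.prod_congr rfl (fun j hj => by rw [Nat.cast_sub (le_of_lt (hlt1 j hj))])
      _ = (∏ j ∈ Finset.Ico 1 i, (m j : ℚ)) / (∏ j ∈ Finset.Ico 1 i, ((M i - m j : ℕ) : ℚ)) :=
          Finset.prod_div_distrib _ _
      _ = (n1 : ℚ) / (d1 : ℚ) := by rw [hn1def, hd1def]; push_cast; ring
  have e2 : (∏ j ∈ Finset.Ioc i c, (m j : ℚ) / ((M j : ℚ) - (m i : ℚ)))
      = (n2 : ℚ) / (d2 : ℚ) := by
    calc (∏ j ∈ Finset.Ioc i c, (m j : ℚ) / ((M j : ℚ) - (m i : ℚ)))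
        = ∏ j ∈ Finset.Ioc i c, ((m j : ℚ) / ((M j - m i : ℕ) : ℚ)) :=
          Finset.prod_congr rfl (fun j hj => by rw [Nat.cast_sub (le_of_lt (hlt2 j hj))])
      _ = (∏ j ∈ Finset.Ioc i c, (m j : ℚ)) / (∏ j ∈ Finset.Ioc i c, ((M j - m i : ℕ) : ℚ)) :=
          Finset.prod_div_distrib _ _
      _ = (n2 : ℚ) / (d2 : ℚ) := by rw [hn2def, hd2def]; push_cast; ring
  rw [e1, e2, div_mul_div_comm]
  have hdpos : (0:ℚ) < (d1 : ℚ) * (d2 : ℚ) := by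
    have : 0 < d1 * d2 := Nat.mul_pos hd1pos hd2pos
    exact_mod_cast this
  rw [div_le_iff₀ hdpos]
  suffices key : ((n1 * n2 : ℕ) : ℤ) ≤ B i * ((d1 * d2 : ℕ) : ℤ) by
    exact_mod_cast key
  clear e1 e2 hdpos hlt1 hlt2
  rcases eq_or_lt_of_le hic with hieq | hilt
  · -- i = c
    subst hieq
    have hn2v : n2 = 1 := by rw [hn2def]; simp
    have hd2v : d2 = 1 := by rw [hd2def]; simp
    have hn1v : n1 = i.factorial := by
      rw [hn1def]
      have hcg : ∀ j ∈ Finset.Ico 1 i, m j = j + 1 := fun j hj => by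
        simp only [Finset.mem_Ico] at hj; exact hmval j hj.1 hj.2
      rw [Finset.prod_congr rfl hcg]
      exact prodSuccIco i hi1
    rcases eq_or_lt_of_le hpc with hpce | hplt
    · -- p = c
      have hBc : B i = (i : ℤ) := by
      -- here i = c, p = c
        rw [hB, hαc, hγ0 i (by omega), hβeq i (by omega) (by omega)]
        have h1 : i.choose (i-1) = i := by
          have h2 := Nat.choose_symm (show i-1 ≤ i by omega)
          rw [show i-(i-1) = 1 by omega, Nat.choose_one_right] at h2
          omega
        rw [h1, show p + 1 - i = 1 by omega]
        push_cast; ring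
      have hd1v : (i-1).factorial ≤ d1 := by
        rw [hd1def]
        have h0 : ∀ j ∈ Finset.Ico 1 i, i - j ≤ M i - m j := by
          intro j hj; simp only [Finset.mem_Ico] at hj
          rw [hmval j hj.1 hj.2, hMval1 i hi1 (by omega)]
          omega
        calc (i-1).factorial = ∏ j ∈ Finset.Ico 1 i, (i - j) := by
              obtain ⟨n, rfl⟩ : ∃ n, i = n + 1 := ⟨i - 1, by omega⟩
              have h := prodIco 0 n
              have h2 : ∀ j ∈ Finset.Ico 1 (n+1), 0 + n + 1 - j = n + 1 - j := by
                intro j hj; omega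
              rw [Finset.prod_congr rfl h2] at h
              simpa using h.symm
          _ ≤ ∏ j ∈ Finset.Ico 1 i, (M i - m j) := Finset.prod_le_prod' h0
      rw [hBc, hn1v, hn2v, hd2v]
      have hnat : i.factorial * 1 ≤ i * (d1 * 1) := by
        calc i.factorial * 1 = i * (i-1).factorial := by
              rw [Nat.mul_one, ← Nat.mul_factorial_pred (by omega : i ≠ 0)]
          _ ≤ i * (d1 * 1) := by
              rw [Nat.mul_one]
              exact Nat.mul_le_mul (le_refl i) hd1v
      exact_mod_cast hnat
    · -- p < c = i
      have hγc : γ i = ((i - p : ℕ) : ℤ) := by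
        have h := hγkey i hplt (le_refl i)
        have h1 : (i-1).choose (i-1) = 1 := Nat.choose_self _
        rw [h1] at h
        have hc0 : (i:ℤ) ≠ 0 := by exact_mod_cast (by omega : i ≠ 0)
        apply mul_left_cancel₀ hc0
        rw [h]; push_cast; ring
      have hBc : B i = ((i - p : ℕ) : ℤ) := by
        rw [hB, hαc, hβ0 i hplt, hγc]; ring
      have hd1v : i.factorial ≤ d1 := by
        rw [hd1def]
        have h0 : ∀ j ∈ Finset.Ico 1 i, i + 1 - j ≤ M i - m j := by
          intro j hj; simp only [Finset.mem_Ico] at hj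
          rw [hmval j hj.1 hj.2, hMval2 i hplt (le_refl i)]
          omega
        calc i.factorial = ∏ j ∈ Finset.Ico 1 i, (i + 1 - j) := by
              obtain ⟨n, rfl⟩ : ∃ n, i = n + 1 := ⟨i - 1, by omega⟩
              have h := prodIco 1 n
              have h2 : ∀ j ∈ Finset.Ico 1 (n+1), 1 + n + 1 - j = n + 1 + 1 - j := by
                intro j hj; omega
              rw [Finset.prod_congr rfl h2] at h
              have h3 : (1+n).factorial = (n+1).factorial := by rw [Nat.add_comm]
              rw [← h3]
              simpa using h.symm
          _ ≤ ∏ j ∈ Finset.Ico 1 i, (M i - m j) := Finset.prod_le_prod' h0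
      rw [hBc, hn1v, hn2v, hd2v]
      have hnat : i.factorial * 1 ≤ (i - p) * (d1 * 1) := by
        have h1 : 1 ≤ i - p := by omega
        calc i.factorial * 1 = i.factorial := Nat.mul_one _
          _ ≤ d1 := hd1v
          _ = 1 * (d1 * 1) := by ring
          _ ≤ (i - p) * (d1 * 1) := Nat.mul_le_mul h1 (le_refl _)
      exact_mod_cast hnat
  · -- i < c
    obtain ⟨a, rfl⟩ : ∃ a, i = a + 1 := ⟨i - 1, by omega⟩
    obtain ⟨s', rfl⟩ : ∃ s', c = (a+1) + (s'+1) := ⟨c - a - 2, by omega⟩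
    have hn1v : n1 = (a+1).factorial := by
      rw [hn1def]
      have hcg : ∀ j ∈ Finset.Ico 1 (a+1), m j = j + 1 := fun j hj => by
        simp only [Finset.mem_Ico] at hj; exact hmval j hj.1 (by omega)
      rw [Finset.prod_congr rfl hcg]
      exact prodSuccIco (a+1) (by omega)
    have hn2v : (a+2).factorial * n2 = (a+1+(s'+1)).factorial * (m (a+1+(s'+1))) := by
      have hsplit : n2 = (∏ j ∈ Finset.Ioc (a+1) (a+1+s'), m j) * m (a+1+(s'+1)) := by
        rw [hn2def, show (a+1)+(s'+1) = (a+1+s')+1 by omega]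
        exact Finset.prod_Ioc_succ_top (by omega) m
      have hcg : ∀ j ∈ Finset.Ioc (a+1) (a+1+s'), m j = j + 1 := fun j hj => by
        simp only [Finset.mem_Ioc] at hj; exact hmval j (by omega) (by omega)
      have hval := prodIocSucc (a+1) s'
      calc (a+2).factorial * n2
          = ((a+2).factorial * (∏ j ∈ Finset.Ioc (a+1) (a+1+s'), (j+1))) * m (a+1+(s'+1)) := by
            rw [hsplit, Finset.prod_congr rfl hcg]; ring
        _ = (a+1+(s'+1)).factorial * m (a+1+(s'+1)) := by
            rw [hval, show a+1+s'+1 = a+1+(s'+1) by omega]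
    rcases eq_or_lt_of_le hpc with hpce | hplt
    · -- Case 3 : p = c
      have hip : (a+1) ≤ p := by omega
      have hmcv : m (a+1+(s'+1)) = u + (a+1+(s'+1)) + 1 := by
        have := hmc1 hpce; omega
      have hn2v' : (a+2).factorial * n2 = (a+1+(s'+1)).factorial * (u + (a+1+(s'+1)) + 1) := by
        rw [hn2v, hmcv]
      have hd1v : u.factorial * d1 = (u+a).factorial := by
        rw [hd1def]
        have hcg : ∀ j ∈ Finset.Ico 1 (a+1), M (a+1) - m j = u + a + 1 - j := by
          intro j hj; simp only [Finset.mem_Ico] at hj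
          rw [hmval j hj.1 (by omega), hMval1 (a+1) (by omega) hip]
          omega
        rw [Finset.prod_congr rfl hcg]
        exact prodIco u a
      have hd2v : u.factorial * d2 = (u+(s'+1)).factorial := by
        rw [hd2def]
        have hcg : ∀ j ∈ Finset.Ioc (a+1) (a+1+(s'+1)), M j - m (a+1) = u + j - (a+1) := by
          intro j hj; simp only [Finset.mem_Ioc] at hj
          rw [hmval (a+1) (by omega) (by omega), hMval1 j (by omega) (by omega)]
          omega
        rw [Finset.prod_congr rfl hcg]
        exact prodIoc u (a+1) (s'+1)
      have hid : (s'+2) * ((a+1+(s'+1)).choose a) = (a+1+(s'+1)) * ((a+(s'+1)).choose a) := by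
        have h1 : (a+1+(s'+1)).choose a = (a+1+(s'+1)).choose (s'+2) := by
          rw [show a+1+(s'+1) = a + (s'+2) by omega]
          exact Nat.choose_symm_add
        have h2 : (a+(s'+1)).choose (s'+1) = (a+(s'+1)).choose a := by
          rw [Nat.add_comm a (s'+1)]
          exact Nat.choose_symm_add
        have h3 := Nat.add_one_mul_choose_eq (a+(s'+1)) (s'+1)
        rw [h1]
        have h4 : (a+(s'+1))+1 = a+1+(s'+1) := by omega
        have h5 : (s'+1)+1 = s'+2 := by omega
        rw [h4, h5] at h3
        rw [← h2]
        linarith [h3]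
      have hBv : B (a+1) = (((a+1) * ((a+1+(s'+1)).choose (a+2))
          + (a+1+(s'+1)) * ((a+(s'+1)).choose a) : ℕ) : ℤ) := by
        rw [hB, hα, hγ0 (a+1) hip, hβeq (a+1) (by omega) hip]
        rw [show (a+1) - 1 = a by omega, show p + 1 - (a+1) = s' + 2 by omega]
        have := hid
        push_cast
        push_cast at this
        linarith [this]
      rw [hBv]
      have hnat := case3_lemma u a (s'+1) n1 n2 d1 d2 (by omega) hn1v hn2v' hd1v hd2v
      exact_mod_cast hnat
    · rcases le_or_gt (a+1) p with hip | hpi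
      · -- Case 5 : i ≤ p < c
        obtain ⟨e, rfl⟩ : ∃ e, p = (a+1) + e := ⟨p - (a+1), by omega⟩
        have he : e ≤ s' := by omega
        have hmcv : m (a+1+(s'+1)) = u + (a+1+(s'+1)) + 2 := by
          have := hmc2 hplt; omega
        have hn2v' : (a+2).factorial * n2 = (a+1+(s'+1)).factorial * (u + (a+1+(s'+1)) + 2) := by
          rw [hn2v, hmcv]
        have hd1v : u.factorial * d1 = (u+a).factorial := by
          rw [hd1def]
        -- M i = (u+2)+i-1
          have hcg : ∀ j ∈ Finset.Ico 1 (a+1), M (a+1) - m j = u + a + 1 - j := by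
            intro j hj; simp only [Finset.mem_Ico] at hj
            rw [hmval j hj.1 (by omega), hMval1 (a+1) (by omega) hip]
            omega
          rw [Finset.prod_congr rfl hcg]
          exact prodIco u a
        have hsplit2 : d2 = (∏ j ∈ Finset.Ioc (a+1) (a+1+e), (M j - m (a+1)))
            * (∏ j ∈ Finset.Ioc (a+1+e) (a+1+(s'+1)), (M j - m (a+1))) := by
          rw [hd2def]
          exact (Finset.prod_Ioc_consecutive _ (by omega) (by omega)).symm
        have hd2av : u.factorial * (∏ j ∈ Finset.Ioc (a+1) (a+1+e), (M j - m (a+1)))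
            = (u+e).factorial := by
          have hcg : ∀ j ∈ Finset.Ioc (a+1) (a+1+e), M j - m (a+1) = u + j - (a+1) := by
            intro j hj; simp only [Finset.mem_Ioc] at hj
            rw [hmval (a+1) (by omega) (by omega), hMval1 j (by omega) (by omega)]
            omega
          rw [Finset.prod_congr rfl hcg]
          exact prodIoc u (a+1) e
        have hd2bv : (u+e+1).factorial
            * (∏ j ∈ Finset.Ioc (a+1+e) (a+1+(s'+1)), (M j - m (a+1)))
            = (u+(s'+2)).factorial := by
          have hcg : ∀ j ∈ Finset.Ioc (a+1+e) (a+1+(s'+1)), M j - m (a+1)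
              = (u+e+1) + j - (a+1+e) := by
            intro j hj; simp only [Finset.mem_Ioc] at hj
            rw [hmval (a+1) (by omega) (by omega), hMval2 j (by omega) (by omega)]
            omega
          rw [Finset.prod_congr rfl hcg]
          have h := prodIoc (u+e+1) (a+1+e) (s'+1-e)
          rw [show (a+1+e) + (s'+1-e) = a+1+(s'+1) by omega] at h
          rw [show (u+e+1) + (s'+1-e) = u+(s'+2) by omega] at h
          exact h
        have hBv : B (a+1) = (((a+1) * ((a+1+(s'+1)).choose (a+2))
            + (e+1) * ((a+1+(s'+1)).choose a) : ℕ) : ℤ) := by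
          rw [hB, hα, hγ0 (a+1) hip, hβeq (a+1) (by omega) hip]
          rw [show (a+1) - 1 = a by omega, show (a+1)+e + 1 - (a+1) = e + 1 by omega]
          push_cast; ring
        rw [hBv]
        have hnat := case5_lemma u a s' e n1 n2 d1
          (∏ j ∈ Finset.Ioc (a+1) (a+1+e), (M j - m (a+1)))
          (∏ j ∈ Finset.Ioc (a+1+e) (a+1+(s'+1)), (M j - m (a+1)))
          he hn1v hn2v' hd1v hd2av hd2bv
        rw [hsplit2]
        exact_mod_cast hnat
      · -- Case 4 : p < i
        have hmcv : m (a+1+(s'+1)) = u + (a+1+(s'+1)) + 2 := by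
          have := hmc2 hplt; omega
        have hn2v' : (a+2).factorial * n2 = (a+1+(s'+1)).factorial * (u + (a+1+(s'+1)) + 2) := by
          rw [hn2v, hmcv]
        have hd1v : (u+1).factorial * d1 = (u+1+a).factorial := by
          rw [hd1def]
          have hcg : ∀ j ∈ Finset.Ico 1 (a+1), M (a+1) - m j = (u+1) + a + 1 - j := by
            intro j hj; simp only [Finset.mem_Ico] at hj
            rw [hmval j hj.1 (by omega), hMval2 (a+1) hpi (by omega)]
            omega
          rw [Finset.prod_congr rfl hcg]
          exact prodIco (u+1) a
        have hd2v : (u+1).factorial * d2 = (u+1+(s'+1)).factorial := by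
          rw [hd2def]
          have hcg : ∀ j ∈ Finset.Ioc (a+1) (a+1+(s'+1)), M j - m (a+1)
              = (u+1) + j - (a+1) := by
            intro j hj; simp only [Finset.mem_Ioc] at hj
            rw [hmval (a+1) (by omega) (by omega), hMval2 j (by omega) (by omega)]
            omega
          rw [Finset.prod_congr rfl hcg]
          exact prodIoc (u+1) (a+1) (s'+1)
        have hBz : ((a:ℤ)+1) * B (a+1) = ((a:ℤ)+1)*((a:ℤ)+1)
            * (((a+1+(s'+1)).choose (a+2) : ℕ) : ℤ)
            + ((a+1-p : ℕ) : ℤ) * ((a:ℤ)+1+(s'+1)) * (((a+(s'+1)).choose a : ℕ) : ℤ) := by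
          rw [hB, hα, hβ0 (a+1) hpi]
          have h := hγkey (a+1) hpi (by omega)
          rw [show (a+1) - 1 = a by omega] at h
          rw [show (a+1+(s'+1)) - 1 = a + (s'+1) by omega] at h
          have he1 : ((a+1-p : ℕ) : ℤ) = ((a+1) - p : ℤ) := by omega
          push_cast at h ⊢
          linarith [h]
        have hnat := case4_lemma u a (s'+1) p n1 n2 d1 d2 (B (a+1)) (by omega) hp1
          (by omega) hn1v hn2v' hd1v hd2v hBz
        push_cast
        push_cast at hnat
        linarith [hnat]
end

section
/- (Theorem 3.8, upper bound, arithmetic form.) For every 1 ≤ i ≤ c one has B_i ≤ (1/((i−1)!·(c−i)!)) · ∏_{1≤j≤c, j≠i} M_j, where B_i is the i-th total Betti number of a reduced arithmetically Cohen–Macaulay divisor of degree d = tc+1−p on a variety of minimal degree of codimension c. -/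
lemma prod_Icc_add_one (c : ℕ) : ∏ j ∈ Finset.Icc 1 c, (j + 1) = (c + 1).factorial := by
  induction c with
  | zero => simp
  | succ n ih =>
    rw [Finset.prod_Icc_succ_top (by omega : 1 ≤ n + 1), ih,
      show n + 1 + 1 = n + 2 from rfl, Nat.factorial_succ (n + 1)]
    ring

lemma fact_choose_id (c i : ℕ) (h1 : 1 ≤ i) (h2 : i ≤ c) :
    (i + 1) * ((i - 1).factorial * (c - i).factorial * (i * (c + 1).choose (i + 1)))
      = (c + 1).factorial := by
  have hf := Nat.choose_mul_factorial_mul_factorial (show i + 1 ≤ c + 1 by omega)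
  have hd : c + 1 - (i + 1) = c - i := by omega
  rw [hd] at hf
  have hi : i * (i - 1).factorial = i.factorial := Nat.mul_factorial_pred (by omega)
  calc (i + 1) * ((i - 1).factorial * (c - i).factorial * (i * (c + 1).choose (i + 1)))
      = (c + 1).choose (i + 1) * ((i + 1) * (i * (i - 1).factorial)) * (c - i).factorial := by ring
    _ = (c + 1).choose (i + 1) * ((i + 1) * i.factorial) * (c - i).factorial := by rw [hi]
    _ = (c + 1).choose (i + 1) * (i + 1).factorial * (c - i).factorial := by
        rw [Nat.factorial_succ]
    _ = (c + 1).factorial := hf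

lemma aux_id1 (c i : ℕ) (h2 : 2 ≤ i) :
    c * (c - 1).choose (i - 2) = c.choose (i - 1) * (i - 1) := by
  by_cases hc : 1 ≤ c
  · have h := Nat.add_one_mul_choose_eq (c - 1) (i - 2)
    have e1 : c - 1 + 1 = c := by omega
    have e2 : i - 2 + 1 = i - 1 := by omega
    rw [e1, e2] at h
    exact h
  · interval_cases c; simp [Nat.choose_eq_zero_iff]; omega

lemma aux_id2 (c i : ℕ) (h1 : 1 ≤ i) :
    c.choose i * i = c.choose (i - 1) * (c - (i - 1)) := by
  have h := Nat.choose_succ_right_eq c (i - 1)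
  have e : i - 1 + 1 = i := by omega
  rw [e] at h
  exact h

/-- Theorem 3.8, upper bound, arithmetic form, for a reduced arithmetically
Cohen–Macaulay divisor of degree `d = tc+1−p` on a variety of minimal degree of
codimension `c`: for every `1 ≤ i ≤ c` one has
`B i ≤ (1/((i−1)!·(c−i)!)) · ∏_{1≤j≤c, j≠i} M j`, where `B i` is the `i`-th total
Betti number. -/
theorem upper_bound_betti_divisor_minimal_degree (t c p : ℕ)
    (ht : 2 ≤ t) (hc : 1 ≤ c) (hp1 : 1 ≤ p) (hpc : p ≤ c)
    (α β' γ B : ℕ → ℤ)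
    (hα : ∀ i, α i = (i : ℤ) * (c.choose (i + 1)))
    (hβ1 : β' 1 = (p : ℤ))
    (hβ : ∀ i, 2 ≤ i → i ≤ p →
      β' i = (p : ℤ) * (c.choose (i - 1)) - (c : ℤ) * ((c - 1).choose (i - 2)))
    (hβ0 : ∀ i, p < i → β' i = 0)
    (hγ0 : ∀ i, i ≤ p → γ i = 0)
    (hγ : ∀ i, p < i → γ i = (c : ℤ) * ((c - 1).choose (i - 1)) - (p : ℤ) * (c.choose i))
    (hB : ∀ i, B i = α i + β' i + γ i)
    (S : ℕ → Finset ℕ)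
    (hS : ∀ i, S i =
      (if α i ≠ 0 then ({i + 1} : Finset ℕ) else ∅) ∪
      (if β' i ≠ 0 then ({t + i - 1} : Finset ℕ) else ∅) ∪
      (if γ i ≠ 0 then ({t + i} : Finset ℕ) else ∅))
    (m M : ℕ → ℕ)
    (hmmem : ∀ i, 1 ≤ i → i ≤ c → m i ∈ S i)
    (hmle : ∀ i, 1 ≤ i → i ≤ c → ∀ x ∈ S i, m i ≤ x)
    (hMmem : ∀ i, 1 ≤ i → i ≤ c → M i ∈ S i)
    (hMge : ∀ i, 1 ≤ i → i ≤ c → ∀ x ∈ S i, x ≤ M i) :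
    ∀ i, 1 ≤ i → i ≤ c →
      (B i : ℚ) ≤ (1 / (((i - 1).factorial : ℚ) * ((c - i).factorial : ℚ))) *
        ∏ j ∈ (Finset.Icc 1 c).erase i, (M j : ℚ) := by
  intro i h1i hic
  -- Step 1: every M j with 1 ≤ j ≤ c satisfies j + 1 ≤ M j
  have hM1 : ∀ j, 1 ≤ j → j ≤ c → j + 1 ≤ M j := by
    intro j hj1 hjc
    have hmem := hMmem j hj1 hjc
    rw [hS] at hmem
    simp only [Finset.mem_union] at hmem
    rcases hmem with (h | h) | h <;> split_ifs at h <;>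
      simp only [Finset.mem_singleton, Finset.notMem_empty] at h <;> omega
  -- Step 2: B i ≤ i * C(c+1, i+1)
  have hBle : B i ≤ (i : ℤ) * ((c + 1).choose (i + 1)) := by
    rw [hB, hα, Nat.choose_succ_succ c i]
    by_cases hip : i ≤ p
    · rw [hγ0 i hip]
      rcases eq_or_lt_of_le h1i with h1 | h2
      · rw [← h1, hβ1, Nat.choose_one_right]
        push_cast
        have : (p : ℤ) ≤ c := by exact_mod_cast hpc
        nlinarith [Int.natCast_nonneg (c.choose (0 + 1 + 1))]
      · rw [hβ i h2 hip]
        have key : p * c.choose (i - 1) ≤ c * (c - 1).choose (i - 2) + i * c.choose i := by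
          have e1 := aux_id1 c i h2
          have e2 := aux_id2 c i h1i
          have h4 : i - 1 + (c - (i - 1)) = c := by omega
          calc p * c.choose (i - 1) ≤ c * c.choose (i - 1) :=
                Nat.mul_le_mul_right _ hpc
            _ = c.choose (i - 1) * (i - 1) + c.choose (i - 1) * (c - (i - 1)) := by
                rw [← Nat.mul_add, h4, Nat.mul_comm]
            _ = c * (c - 1).choose (i - 2) + i * c.choose i := by
                rw [← e1, ← e2, Nat.mul_comm (c.choose i) i]
        have key' : (p : ℤ) * c.choose (i - 1) ≤
            (c : ℤ) * (c - 1).choose (i - 2) + (i : ℤ) * c.choose i := by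
          exact_mod_cast key
        push_cast
        linarith
    · push_neg at hip
      rw [hβ0 i hip, hγ i hip]
      have e3 : c * (c - 1).choose (i - 1) = c.choose i * i := by
        have h := Nat.add_one_mul_choose_eq (c - 1) (i - 1)
        have e1 : c - 1 + 1 = c := by omega
        have e2 : i - 1 + 1 = i := by omega
        rw [e1, e2] at h
        exact h
      have e3' : (c : ℤ) * (c - 1).choose (i - 1) = (c.choose i : ℤ) * i := by
        exact_mod_cast e3
      have hp0 : (0 : ℤ) ≤ (p : ℤ) * c.choose i := by positivity
      push_cast
      linarith
  -- Step 3: product bound in ℕ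
  have hiIcc : i ∈ Finset.Icc 1 c := Finset.mem_Icc.mpr ⟨h1i, hic⟩
  have hprod1 : ∏ j ∈ (Finset.Icc 1 c).erase i, (j + 1) ≤
      ∏ j ∈ (Finset.Icc 1 c).erase i, M j := by
    apply Finset.prod_le_prod'
    intro j hj
    have hj' := Finset.mem_of_mem_erase hj
    rw [Finset.mem_Icc] at hj'
    exact hM1 j hj'.1 hj'.2
  have hfull : (i + 1) * ∏ j ∈ (Finset.Icc 1 c).erase i, (j + 1) = (c + 1).factorial :=
    (Finset.mul_prod_erase _ (fun j => j + 1) hiIcc).trans (prod_Icc_add_one c)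
  have hkeyN : (i - 1).factorial * (c - i).factorial * (i * (c + 1).choose (i + 1)) ≤
      ∏ j ∈ (Finset.Icc 1 c).erase i, M j := by
    have h := fact_choose_id c i h1i hic
    refine Nat.le_of_mul_le_mul_left ?_ (show 0 < i + 1 by omega)
    calc (i + 1) * ((i - 1).factorial * (c - i).factorial * (i * (c + 1).choose (i + 1)))
        = (c + 1).factorial := h
      _ = (i + 1) * ∏ j ∈ (Finset.Icc 1 c).erase i, (j + 1) := hfull.symm
      _ ≤ (i + 1) * ∏ j ∈ (Finset.Icc 1 c).erase i, M j :=
          Nat.mul_le_mul_left _ hprod1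
  -- Step 4: assemble over ℚ
  have hF : (0 : ℚ) < ((i - 1).factorial : ℚ) * ((c - i).factorial : ℚ) := by positivity
  rw [one_div, inv_mul_eq_div, le_div_iff₀ hF]
  have hcastP : ∏ j ∈ (Finset.Icc 1 c).erase i, (M j : ℚ) =
      ((∏ j ∈ (Finset.Icc 1 c).erase i, M j : ℕ) : ℚ) := by
    push_cast; rfl
  have hkeyQ : (((i - 1).factorial : ℚ) * ((c - i).factorial : ℚ)) *
      ((i : ℚ) * ((c + 1).choose (i + 1) : ℚ)) ≤
      ∏ j ∈ (Finset.Icc 1 c).erase i, (M j : ℚ) := by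
    rw [hcastP]
    exact_mod_cast hkeyN
  have hBleQ : (B i : ℚ) ≤ (i : ℚ) * ((c + 1).choose (i + 1) : ℚ) := by
    exact_mod_cast hBle
  calc (B i : ℚ) * (((i - 1).factorial : ℚ) * ((c - i).factorial : ℚ))
      ≤ ((i : ℚ) * ((c + 1).choose (i + 1) : ℚ)) *
        (((i - 1).factorial : ℚ) * ((c - i).factorial : ℚ)) := by
        apply mul_le_mul_of_nonneg_right hBleQ (le_of_lt hF)
    _ = (((i - 1).factorial : ℚ) * ((c - i).factorial : ℚ)) *
        ((i : ℚ) * ((c + 1).choose (i + 1) : ℚ)) := by ring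
    _ ≤ ∏ j ∈ (Finset.Icc 1 c).erase i, (M j : ℚ) := hkeyQ
end
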